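/- arXiv:1711.01483 — 12 statements merged into one kernel-verified Lean document; each statement's English description precedes it below -/
import Mathlib

section
/- Let G = (A, B, E) be a bipartite graph that contains no induced matching of size n (i.e., no nK₂ as induced subgraph respecting the bipartition). Then there is a set S ⊆ A with |S| ≤ n−1 such that N(S) = N(A), i.e., every vertex of B that has a neighbour in A has a neighbour in S. -/
open Finset

/-- A bipartite graph with top part `A`, bottom part `B` and edge relation `E` contains
an induced matching `nK₂` (respecting the bipartition). -/
def HasInducedMatching {A B : Type*} (E : A → B → Prop) (n : ℕ) : Prop :=
  ∃ (a : Fin n → A) (b : Fin n → B), Function.Injective a ∧ Function.Injective b ∧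
    (∀ i, E (a i) (b i)) ∧ (∀ i j, i ≠ j → ¬ E (a i) (b j))

/-- If a bipartite graph contains no induced matching of size `n`, then there is a set
`S ⊆ A` with `|S| ≤ n - 1` covering the neighbourhood of `A`: every vertex of `B` with a
neighbour in `A` has a neighbour in `S`. -/
theorem matching_free_cover {A B : Type*} [Fintype A] (E : A → B → Prop) (n : ℕ)
    (hfree : ¬ HasInducedMatching E n) :
    ∃ S : Finset A, S.card ≤ n - 1 ∧ ∀ b : B, (∃ a : A, E a b) → ∃ a ∈ S, E a b := by
  classical
  have hex : ∃ k, ∃ S : Finset A, S.card = k ∧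
      ∀ b : B, (∃ a, E a b) → ∃ a ∈ S, E a b := by
    refine ⟨(Finset.univ : Finset A).card, Finset.univ, rfl, ?_⟩
    rintro b ⟨a, ha⟩
    exact ⟨a, Finset.mem_univ a, ha⟩
  obtain ⟨S, hScard, hScov⟩ := Nat.find_spec hex
  refine ⟨S, ?_, hScov⟩
  by_contra hle
  -- then `n ≤ S.card`
  have hn : n ≤ S.card := by
    cases n with
    | zero => exact Nat.zero_le _
    | succ m => omega
  -- every `a ∈ S` has a private neighbour
  have hpriv : ∀ a ∈ S, ∃ b : B, E a b ∧ ∀ a' ∈ S, a' ≠ a → ¬ E a' b := by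
    intro a haS
    have hsmall : (S.erase a).card < Nat.find hex := by
      rw [← hScard]
      exact Finset.card_erase_lt_of_mem haS
    have hnotcov : ¬ ∀ b : B, (∃ x, E x b) → ∃ x ∈ S.erase a, E x b := by
      intro hcov
      exact absurd (Nat.find_min' hex ⟨S.erase a, rfl, hcov⟩) (by omega)
    push_neg at hnotcov
    obtain ⟨b, hb1, hb2⟩ := hnotcov
    obtain ⟨x, hxS, hxb⟩ := hScov b hb1
    have hxa : x = a := by
      by_contra hne
      exact hb2 x (Finset.mem_erase.mpr ⟨hne, hxS⟩) hxb
    subst hxa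
    exact ⟨b, hxb, fun a' ha'S hne => hb2 a' (Finset.mem_erase.mpr ⟨hne, ha'S⟩)⟩
  obtain ⟨t, hts, htcard⟩ := Finset.exists_subset_card_eq hn
  have e : Fin n ≃ t := (Finset.equivFinOfCardEq htcard).symm
  set a : Fin n → A := fun i => ((e i : t) : A) with ha_def
  have haS : ∀ i, a i ∈ S := fun i => hts (e i).2
  have hspec : ∀ i, E (a i) (Classical.choose (hpriv (a i) (haS i))) ∧
      ∀ a' ∈ S, a' ≠ a i → ¬ E a' (Classical.choose (hpriv (a i) (haS i))) :=
    fun i => Classical.choose_spec (hpriv (a i) (haS i))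
  set b : Fin n → B := fun i => Classical.choose (hpriv (a i) (haS i)) with hb_def
  have ha_inj : Function.Injective a := fun i j h =>
    e.injective (Subtype.coe_injective h)
  have hcross : ∀ i j, i ≠ j → ¬ E (a i) (b j) := by
    intro i j hij
    exact (hspec j).2 (a i) (haS i) (fun h => hij (ha_inj h))
  have hb_inj : Function.Injective b := by
    intro i j h
    by_contra hij
    exact hcross i j hij (h ▸ (hspec i).1)
  exact hfree ⟨a, b, ha_inj, hb_inj, fun i => (hspec i).1, hcross⟩
end

section
/- Let G = (A, B, E) be a bipartite graph such that the bipartite complement of G contains no induced matching of size m (equivalently, G contains no induced bipartite co-matching of size m). Then there is a set S ⊆ A with |S| ≤ m−1 such that every vertex of B having a non-neighbour in A has a non-neighbour in S. -/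
open Finset

/-- A bipartite graph with top part `A`, bottom part `B` and edge relation `E` contains
an induced bipartite co-matching of size `m`: vertices `a₁,…,aₘ`, `b₁,…,bₘ` with
`aᵢbᵢ ∉ E` and `aᵢbⱼ ∈ E` for `i ≠ j`. -/
def HasInducedCoMatching {A B : Type*} (E : A → B → Prop) (m : ℕ) : Prop :=
  ∃ (a : Fin m → A) (b : Fin m → B), Function.Injective a ∧ Function.Injective b ∧
    (∀ i, ¬ E (a i) (b i)) ∧ (∀ i j, i ≠ j → E (a i) (b j))

theorem aux_cocover : ∀ (m : ℕ) {A B : Type*} [Fintype A] (E : A → B → Prop),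
    ¬ HasInducedCoMatching E m →
    ∃ S : Finset A, S.card ≤ m - 1 ∧ ∀ b : B, (∃ a : A, ¬ E a b) → ∃ a ∈ S, ¬ E a b := by
  intro m
  induction m with
  | zero =>
    intro A B _ E hfree
    exact absurd ⟨Fin.elim0, Fin.elim0, fun i => i.elim0, fun i => i.elim0,
      fun i => i.elim0, fun i => i.elim0⟩ hfree
  | succ n ih =>
    intro A B _ E hfree
    classical
    by_cases hex : ∃ b : B, ∃ a : A, ¬ E a b
    · obtain ⟨b1, a1, hab1⟩ := hex
      set nn : B → Finset A := fun b => Finset.univ.filter (fun a => ¬ E a b) with hnn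
      have hmem : ∀ b a, a ∈ nn b ↔ ¬ E a b := by intro b a; simp [hnn]
      have hPex : ∃ k, ∃ b : B, (nn b).Nonempty ∧ (nn b).card = k :=
        ⟨(nn b1).card, b1, ⟨a1, (hmem b1 a1).2 hab1⟩, rfl⟩
      obtain ⟨b0, hb0ne, hb0card⟩ := Nat.find_spec hPex
      have hmin : ∀ b : B, (nn b).Nonempty → (nn b0).card ≤ (nn b).card := by
        intro b hb
        rw [hb0card]
        by_contra h
        push_neg at h
        exact Nat.find_min hPex h ⟨b, hb, rfl⟩
      obtain ⟨a0, ha0⟩ := hb0ne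
      have ha0b0 : ¬ E a0 b0 := (hmem b0 a0).1 ha0
      rcases n with _ | n'
      · exact absurd ⟨fun _ => a0, fun _ => b0,
          fun i j _ => Subsingleton.elim (α := Fin 1) i j,
          fun i j _ => Subsingleton.elim (α := Fin 1) i j, fun _ => ha0b0,
          fun i j hij => absurd (Subsingleton.elim (α := Fin 1) i j) hij⟩ hfree
      · have hfree' : ¬ HasInducedCoMatching
            (fun (a : {a : A // E a b0}) (b : {b : B // E a0 b}) => E a.1 b.1) (n' + 1) := by
          rintro ⟨a, b, ha, hb, h1, h2⟩
          apply hfree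
          refine ⟨Fin.cons a0 (fun i => (a i).1), Fin.cons b0 (fun i => (b i).1), ?_, ?_, ?_, ?_⟩
          · intro i j hij
            induction i using Fin.cases with
            | zero =>
              induction j using Fin.cases with
              | zero => rfl
              | succ j =>
                simp only [Fin.cons_zero, Fin.cons_succ] at hij
                have := (a j).2
                rw [← hij] at this
                exact absurd this ha0b0
            | succ i =>
              induction j using Fin.cases with
              | zero =>
                simp only [Fin.cons_zero, Fin.cons_succ] at hij
                have := (a i).2
                rw [hij] at this
                exact absurd this ha0b0
              | succ j =>
                simp only [Fin.cons_succ] at hij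
                exact congrArg Fin.succ (ha (Subtype.ext hij))
          · intro i j hij
            induction i using Fin.cases with
            | zero =>
              induction j using Fin.cases with
              | zero => rfl
              | succ j =>
                simp only [Fin.cons_zero, Fin.cons_succ] at hij
                have := (b j).2
                rw [← hij] at this
                exact absurd this ha0b0
            | succ i =>
              induction j using Fin.cases with
              | zero =>
                simp only [Fin.cons_zero, Fin.cons_succ] at hij
                have := (b i).2
                rw [hij] at this
                exact absurd this ha0b0
              | succ j =>
                simp only [Fin.cons_succ] at hij
                exact congrArg Fin.succ (hb (Subtype.ext hij))
          · intro i
            induction i using Fin.cases with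
            | zero => simpa using ha0b0
            | succ i => simpa using h1 i
          · intro i j hij
            induction i using Fin.cases with
            | zero =>
              induction j using Fin.cases with
              | zero => exact absurd rfl hij
              | succ j => simpa using (b j).2
            | succ i =>
              induction j using Fin.cases with
              | zero => simpa using (a i).2
              | succ j =>
                have : i ≠ j := fun h => hij (by rw [h])
                simpa using h2 i j this
        obtain ⟨S', hS'card, hS'cov⟩ := ih _ hfree'
        refine ⟨insert a0 (S'.image Subtype.val), ?_, ?_⟩
        · have h1 : (insert a0 (S'.image Subtype.val)).card ≤ (S'.image Subtype.val).card + 1 :=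
            Finset.card_insert_le _ _
          have h2 : (S'.image Subtype.val).card ≤ S'.card := Finset.card_image_le
          omega
        · rintro b ⟨a, hab⟩
          by_cases hE : E a0 b
          · have hA' : ∃ a' : {a : A // E a b0}, ¬ E a'.1 b := by
              by_contra hc
              push_neg at hc
              have hsub : nn b ⊆ nn b0 := by
                intro x hx
                rw [hmem] at hx ⊢
                intro hxb0
                exact hx (hc ⟨x, hxb0⟩)
              have hss : nn b ⊂ nn b0 :=
                ⟨hsub, fun h => ((hmem b a0).1 (h ha0)) hE⟩
              have h1 := Finset.card_lt_card hss
              have h2 := hmin b ⟨a, (hmem b a).2 hab⟩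
              omega
            obtain ⟨a', ha'⟩ := hA'
            obtain ⟨s, hs, hsb⟩ := hS'cov ⟨b, hE⟩ ⟨a', ha'⟩
            exact ⟨s.1, Finset.mem_insert_of_mem (Finset.mem_image_of_mem _ hs), hsb⟩
          · exact ⟨a0, Finset.mem_insert_self _ _, hE⟩
    · push_neg at hex
      exact ⟨∅, by simp, fun b hb => absurd (hex b hb.choose) hb.choose_spec⟩

/-- If a bipartite graph contains no induced bipartite co-matching of size `m`, then there
is a set `S ⊆ A` with `|S| ≤ m - 1` co-covering the non-neighbourhood of `A`: every vertex
of `B` with a non-neighbour in `A` has a non-neighbour in `S`. -/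
theorem comatching_free_cocover {A B : Type*} [Fintype A] (E : A → B → Prop) (m : ℕ)
    (hfree : ¬ HasInducedCoMatching E m) :
    ∃ S : Finset A, S.card ≤ m - 1 ∧ ∀ b : B, (∃ a : A, ¬ E a b) → ∃ a ∈ S, ¬ E a b := by
  exact aux_cocover m E hfree
end

section
/- Every graph G containing no induced 2K₂ and no induced C₄ has cochromatic number at most 3: its vertex set can be partitioned into one independent set and two cliques. -/
open Finset

private lemma core {W : Type*} (G : SimpleGraph W)
    (two : ∀ a b c d : W, G.Adj a b → G.Adj c d → ¬ G.Adj a c → ¬ G.Adj a d →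
      ¬ G.Adj b c → ¬ G.Adj b d → a = c ∨ a = d ∨ b = c ∨ b = d)
    (four : ∀ a b c d : W, a ≠ c → b ≠ d → G.Adj a b → G.Adj b c → G.Adj c d → G.Adj d a →
      ¬ G.Adj a c → ¬ G.Adj b d → False)
    (five : ∀ a b c d e : W, a ≠ c → a ≠ d → b ≠ d → b ≠ e → c ≠ e →
      G.Adj a b → G.Adj b c → G.Adj c d → G.Adj d e → G.Adj e a →
      ¬ G.Adj a c → ¬ G.Adj a d → ¬ G.Adj b d → ¬ G.Adj b e → ¬ G.Adj c e → False)
    (K : Finset W)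
    (hclique : ∀ a ∈ K, ∀ b ∈ K, a ≠ b → G.Adj a b)
    (h2 : ∀ x, x ∉ K → ¬ ∀ k ∈ K, G.Adj x k)
    (u v : W) (hu : u ∉ K) (hv : v ∉ K) (huv : G.Adj u v)
    (hdom : ∀ a ∈ K, G.Adj a v → G.Adj a u) :
    ∃ e ∈ K, ¬ G.Adj u e ∧ (∀ k ∈ K, k ≠ e → G.Adj u k) ∧
      (∀ s, s ∉ K → s ≠ u → ¬ G.Adj e s) := by
  classical
  obtain ⟨e, he, hue⟩ : ∃ e ∈ K, ¬ G.Adj u e := by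
    have := h2 u hu
    push_neg at this
    exact this
  have hve : ¬ G.Adj e v := fun h => hue (hdom e he h).symm
  have hue' : ¬ G.Adj e u := fun h => hue h.symm
  have hve' : ¬ G.Adj v e := fun h => hve h.symm
  -- u is adjacent to all of K except e
  have hKu : ∀ k ∈ K, k ≠ e → G.Adj u k := by
    intro k hk hke
    by_contra hku
    have hkv : ¬ G.Adj v k := fun h => hku (hdom k hk h.symm).symm
    have hek : G.Adj e k := hclique e he k hk (Ne.symm hke)
    rcases two u v e k huv hek hue hku hve' hkv with h | h | h | h
    · subst h; exact hu he
    · subst h; exact hu hk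
    · subst h; exact hv he
    · subst h; exact hv hk
  refine ⟨e, he, hue, hKu, ?_⟩
  intro s hs hsu hes
  have hsv : s ≠ v := by
    rintro rfl
    exact hve hes
  have hes' : G.Adj s e := hes.symm
  -- sub-lemma: if s ~ u then s is adjacent to all of K, contradicting h2
  have case_su : G.Adj s u → False := by
    intro hsu'
    apply h2 s hs
    intro k hk
    by_cases hke : k = e
    · subst hke; exact hes'
    · by_contra hks
      have h1 : G.Adj u k := hKu k hk hke
      have h2'' : G.Adj k e := hclique k hk e he hke
      have hne1 : u ≠ e := fun h => hu (h ▸ he)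
      have hne2 : k ≠ s := fun h => hs (h ▸ hk)
      have hks' : ¬ G.Adj k s := fun h => hks h.symm
      exact four u k e s hne1 hne2 h1 h2'' hes hsu' hue hks'
  by_cases hsu2 : G.Adj s u
  · exact case_su hsu2
  -- now ¬ s ~ u; establish s ~ v
  have hsv' : G.Adj s v := by
    by_contra h2'
    have h1' : ¬ G.Adj s u := hsu2
    rcases two e s u v hes huv hue' hve h1' h2'
      with h | h | h | h
    · subst h; exact hu he
    · subst h; exact hv he
    · exact hsu h
    · exact hsv h
  by_cases hall : ∀ b ∈ K, b ≠ e → G.Adj b v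
  · -- s adjacent to all of K, contradiction with h2
    apply h2 s hs
    intro k hk
    by_cases hke : k = e
    · subst hke; exact hes'
    · by_contra hks
      -- C4 on (k, v, s, e)
      have h1 : G.Adj k v := hall k hk hke
      have h2'' : G.Adj e k := hclique e he k hk (Ne.symm hke)
      have hne1 : k ≠ s := fun h => hs (h ▸ hk)
      have hne2 : v ≠ e := fun h => hv (h ▸ he)
      have hks' : ¬ G.Adj k s := fun h => hks h.symm
      exact four k v s e hne1 hne2 h1 hsv'.symm hes' h2'' hks' hve'
  · push_neg at hall
    obtain ⟨b, hb, hbe, hbv⟩ := hall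
    have hub : G.Adj u b := hKu b hb hbe
    have hbs : ¬ G.Adj b s := by
      intro hbs
      -- C4 on (u, b, s, v)
      have hne1 : u ≠ s := fun h => hsu (h.symm)
      have hne2 : b ≠ v := fun h => hv (h ▸ hb)
      have h3 : ¬ G.Adj u s := fun h => hsu2 h.symm
      exact four u b s v hne1 hne2 hub hbs hsv' huv.symm h3 hbv
    -- C5 on (u, v, s, e, b)
    have n1 : u ≠ s := fun h => hsu h.symm
    have n2 : u ≠ e := fun h => hu (h ▸ he)
    have n3 : v ≠ e := fun h => hv (h ▸ he)
    have n4 : v ≠ b := fun h => hv (h ▸ hb)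
    have n5 : s ≠ b := fun h => hs (h ▸ hb)
    have a1 : G.Adj v s := hsv'.symm
    have a2 : G.Adj e b := hclique e he b hb (Ne.symm hbe)
    have a3 : G.Adj b u := hub.symm
    have m1 : ¬ G.Adj u s := fun h => hsu2 h.symm
    have m2 : ¬ G.Adj v b := fun h => hbv h.symm
    have m3 : ¬ G.Adj s b := fun h => hbs h.symm
    exact five u v s e b n1 n2 n3 n4 n5 huv a1 hes' a2 a3 m1 hue hve' m2 m3

section
variable {W : Type*} (G : SimpleGraph W)

private theorem finite_split [Fintype W]
    (two : ∀ a b c d : W, G.Adj a b → G.Adj c d → ¬ G.Adj a c → ¬ G.Adj a d →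
      ¬ G.Adj b c → ¬ G.Adj b d → a = c ∨ a = d ∨ b = c ∨ b = d)
    (four : ∀ a b c d : W, a ≠ c → b ≠ d → G.Adj a b → G.Adj b c → G.Adj c d → G.Adj d a →
      ¬ G.Adj a c → ¬ G.Adj b d → False)
    (five : ∀ a b c d e : W, a ≠ c → a ≠ d → b ≠ d → b ≠ e → c ≠ e →
      G.Adj a b → G.Adj b c → G.Adj c d → G.Adj d e → G.Adj e a →
      ¬ G.Adj a c → ¬ G.Adj a d → ¬ G.Adj b d → ¬ G.Adj b e → ¬ G.Adj c e → False) :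
    ∃ C : Set W, (∀ u ∈ C, ∀ v ∈ C, u ≠ v → G.Adj u v) ∧
      (∀ u v : W, u ∉ C → v ∉ C → u ≠ v → ¬ G.Adj u v) := by
  classical
  set N := Fintype.card W with hN
  set out : Finset W → ℕ :=
    fun K => (univ.filter (fun x => x ∉ K ∧ ∃ y, y ∉ K ∧ G.Adj x y)).card with hout
  set μ : Finset W → ℕ := fun K => K.card * (N + 1) + (N - out K) with hμ
  have houtle : ∀ K, out K ≤ N := fun K => card_filter_le _ _
  set cliques : Finset (Finset W) :=
    univ.filter (fun K : Finset W => ∀ a ∈ K, ∀ b ∈ K, a ≠ b → G.Adj a b) with hcl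
  obtain ⟨K, hKmem, hKmax⟩ := Finset.exists_max_image cliques μ ⟨∅, by simp [hcl]⟩
  have hclique : ∀ a ∈ K, ∀ b ∈ K, a ≠ b → G.Adj a b := by
    have := hKmem; rw [hcl, mem_filter] at this; exact this.2
  have h2 : ∀ x, x ∉ K → ¬ ∀ k ∈ K, G.Adj x k := by
    intro x hx hall
    have hcl' : insert x K ∈ cliques := by
      rw [hcl, mem_filter]
      refine ⟨mem_univ _, ?_⟩
      intro a ha b hb hab
      rcases mem_insert.mp ha with rfl | ha' <;> rcases mem_insert.mp hb with rfl | hb'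
      · exact absurd rfl hab
      · exact hall b hb'
      · exact (hall a ha').symm
      · exact hclique a ha' b hb' hab
    have hle := hKmax _ hcl'
    have hcard : (insert x K).card = K.card + 1 := card_insert_of_notMem hx
    simp only [hμ, hcard] at hle
    have e1 : (K.card + 1) * (N + 1) = K.card * (N + 1) + (N + 1) := by ring
    have e2 : N - out K ≤ N := Nat.sub_le _ _
    omega
  have hindep : ∀ u v : W, u ∉ K → v ∉ K → G.Adj u v → False := by
    intro u v hu hv huv
    have hkey : ∃ w w' e, w ∉ K ∧ w' ∉ K ∧ G.Adj w w' ∧ e ∈ K ∧ ¬ G.Adj w e ∧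
        (∀ k ∈ K, k ≠ e → G.Adj w k) ∧ (∀ s, s ∉ K → s ≠ w → ¬ G.Adj e s) := by
      by_cases hd : ∀ a ∈ K, G.Adj a v → G.Adj a u
      · obtain ⟨e, he, hne, hKu, hens⟩ := core G two four five K hclique h2 u v hu hv huv hd
        exact ⟨u, v, e, hu, hv, huv, he, hne, hKu, hens⟩
      · push_neg at hd
        obtain ⟨b, hb, hbv, hbu⟩ := hd
        have hd' : ∀ a ∈ K, G.Adj a u → G.Adj a v := by
          intro a ha hau
          by_contra hav
          have hne1 : u ≠ b := fun h => hu (h ▸ hb)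
          have hne2 : a ≠ v := fun h => hv (h ▸ ha)
          have hab : G.Adj a b := hclique a ha b hb (fun h => hbu (h ▸ hau))
          exact four u a b v hne1 hne2 hau.symm hab hbv huv.symm
            (fun h => hbu h.symm) hav
        obtain ⟨e, he, hne, hKu, hens⟩ :=
          core G two four five K hclique h2 v u hv hu huv.symm hd'
        exact ⟨v, u, e, hv, hu, huv.symm, he, hne, hKu, hens⟩
    obtain ⟨w, w', e, hw, hw', hww', he, hwe2, hKw, hens⟩ := hkey
    set K' := insert w (K.erase e) with hK'
    have hwK' : w ∉ K.erase e := fun h => hw (mem_of_mem_erase h)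
    have hcardK' : K'.card = K.card := by
      rw [hK', card_insert_of_notMem hwK', card_erase_of_mem he]
      have : 0 < K.card := card_pos.mpr ⟨e, he⟩
      omega
    have hcliqueK' : K' ∈ cliques := by
      rw [hcl, mem_filter]
      refine ⟨mem_univ _, ?_⟩
      intro a ha b hb hab
      rw [hK', mem_insert] at ha hb
      rcases ha with rfl | ha' <;> rcases hb with rfl | hb'
      · exact absurd rfl hab
      · exact hKw b (mem_of_mem_erase hb') (ne_of_mem_erase hb')
      · exact (hKw a (mem_of_mem_erase ha') (ne_of_mem_erase ha')).symm
      · exact hclique a (mem_of_mem_erase ha') b (mem_of_mem_erase hb') hab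
    have hwP : w ∈ univ.filter (fun x => x ∉ K ∧ ∃ y, y ∉ K ∧ G.Adj x y) := by
      simp only [mem_filter, mem_univ, true_and]
      exact ⟨hw, w', hw', hww'⟩
    have hmemK : ∀ z, z ∉ K' → z ≠ e → z ∉ K := by
      intro z hz hze hzK
      exact hz (by rw [hK']; exact mem_insert_of_mem (mem_erase.mpr ⟨hze, hzK⟩))
    have hsub : univ.filter (fun x => x ∉ K' ∧ ∃ y, y ∉ K' ∧ G.Adj x y) ⊆
        (univ.filter (fun x => x ∉ K ∧ ∃ y, y ∉ K ∧ G.Adj x y)).erase w := by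
      intro x hx
      simp only [mem_filter, mem_univ, true_and] at hx
      obtain ⟨hxK', y, hyK', hxy⟩ := hx
      have hwmem : w ∈ K' := by rw [hK']; exact mem_insert_self _ _
      have hxw : x ≠ w := by rintro rfl; exact hxK' hwmem
      have hyw : y ≠ w := by rintro rfl; exact hyK' hwmem
      have hxe : x ≠ e := by
        intro hq
        have hey : G.Adj e y := by rw [← hq]; exact hxy
        have hyK : y ∉ K := by
          intro hyK
          have hye : y ≠ e := by intro h; rw [h] at hey; exact G.irrefl hey
          exact hyK' (by rw [hK']; exact mem_insert_of_mem (mem_erase.mpr ⟨hye, hyK⟩))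
        exact hens y hyK hyw hey
      have hxK : x ∉ K := hmemK x hxK' hxe
      have hyK : y ∉ K := by
        intro hyK
        by_cases hye : y = e
        · have hex : G.Adj e x := by rw [← hye]; exact hxy.symm
          exact hens x hxK hxw hex
        · exact hyK' (by rw [hK']; exact mem_insert_of_mem (mem_erase.mpr ⟨hye, hyK⟩))
      rw [mem_erase]
      simp only [mem_filter, mem_univ, true_and]
      exact ⟨hxw, hxK, y, hyK, hxy⟩
    have houtlt : out K' < out K := by
      rw [hout]
      calc (univ.filter (fun x => x ∉ K' ∧ ∃ y, y ∉ K' ∧ G.Adj x y)).card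
        ≤ ((univ.filter (fun x => x ∉ K ∧ ∃ y, y ∉ K ∧ G.Adj x y)).erase w).card :=
          card_le_card hsub
        _ < (univ.filter (fun x => x ∉ K ∧ ∃ y, y ∉ K ∧ G.Adj x y)).card :=
          card_erase_lt_of_mem hwP
    have hle := hKmax _ hcliqueK'
    simp only [hμ, hcardK'] at hle
    have h1 := houtle K
    have h2' := houtle K'
    omega
  refine ⟨(K : Set W), ?_, ?_⟩
  · intro a ha b hb hab
    exact hclique a ha b hb hab
  · intro a b ha hb hab hadj
    exact hindep a b ha hb hadj
end

private theorem transfer {V : Type*} (G : SimpleGraph V)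
    (two : ∀ a b c d : V, G.Adj a b → G.Adj c d → ¬ G.Adj a c → ¬ G.Adj a d →
      ¬ G.Adj b c → ¬ G.Adj b d → a = c ∨ a = d ∨ b = c ∨ b = d)
    (four : ∀ a b c d : V, a ≠ c → b ≠ d → G.Adj a b → G.Adj b c → G.Adj c d → G.Adj d a →
      ¬ G.Adj a c → ¬ G.Adj b d → False)
    (five : ∀ a b c d e : V, a ≠ c → a ≠ d → b ≠ d → b ≠ e → c ≠ e →
      G.Adj a b → G.Adj b c → G.Adj c d → G.Adj d e → G.Adj e a →
      ¬ G.Adj a c → ¬ G.Adj a d → ¬ G.Adj b d → ¬ G.Adj b e → ¬ G.Adj c e → False) :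
    ∃ C : Set V, (∀ u ∈ C, ∀ v ∈ C, u ≠ v → G.Adj u v) ∧
      (∀ u v : V, u ∉ C → v ∉ C → u ≠ v → ¬ G.Adj u v) := by
  classical
  have hfin : ∀ s : Finset V, ∃ C : Set {x // x ∈ s},
      (∀ u ∈ C, ∀ v ∈ C, u ≠ v → G.Adj u.1 v.1) ∧
      (∀ u v : {x // x ∈ s}, u ∉ C → v ∉ C → u ≠ v → ¬ G.Adj u.1 v.1) := by
    intro s
    have := finite_split (G.comap (fun x : {x // x ∈ s} => (x : V)))
      (by
        intro a b c d hab hcd hac had hbc hbd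
        rcases two a.1 b.1 c.1 d.1 hab hcd hac had hbc hbd with h | h | h | h
        · exact Or.inl (Subtype.ext h)
        · exact Or.inr (Or.inl (Subtype.ext h))
        · exact Or.inr (Or.inr (Or.inl (Subtype.ext h)))
        · exact Or.inr (Or.inr (Or.inr (Subtype.ext h))))
      (by
        intro a b c d hac hbd hab hbc hcd hda hnac hnbd
        exact four a.1 b.1 c.1 d.1 (fun h => hac (Subtype.ext h))
          (fun h => hbd (Subtype.ext h)) hab hbc hcd hda hnac hnbd)
      (by
        intro a b c d e hac had hbd hbe hce hab hbc hcd hde hea hnac hnad hnbd hnbe hnce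
        exact five a.1 b.1 c.1 d.1 e.1 (fun h => hac (Subtype.ext h))
          (fun h => had (Subtype.ext h)) (fun h => hbd (Subtype.ext h))
          (fun h => hbe (Subtype.ext h)) (fun h => hce (Subtype.ext h))
          hab hbc hcd hde hea hnac hnad hnbd hnbe hnce)
    exact this
  choose Cs hCs1 hCs2 using hfin
  set U : Ultrafilter (Finset V) := Ultrafilter.of Filter.atTop with hU
  have hatTop : ∀ x : V, {s : Finset V | x ∈ s} ∈ U := by
    intro x
    have h1 : {s : Finset V | {x} ≤ s} ∈ (Filter.atTop : Filter (Finset V)) :=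
      Filter.mem_atTop {x}
    have h2 : {s : Finset V | {x} ≤ s} ⊆ {s : Finset V | x ∈ s} := by
      intro s hs
      exact Finset.singleton_subset_iff.mp hs
    exact (Ultrafilter.of_le Filter.atTop) (Filter.mem_of_superset h1 h2)
  set A : V → Set (Finset V) := fun x => {s | ∃ h : x ∈ s, (⟨x, h⟩ : {y // y ∈ s}) ∈ Cs s}
    with hA
  set F : Set V := {x | A x ∈ U} with hF
  -- key pair extraction
  have key : ∀ x y : V, x ≠ y → ∃ s : Finset V, ∃ hx : x ∈ s, ∃ hy : y ∈ s,
      ((⟨x, hx⟩ : {z // z ∈ s}) ∈ Cs s ↔ x ∈ F) ∧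
      ((⟨y, hy⟩ : {z // z ∈ s}) ∈ Cs s ↔ y ∈ F) := by
    intro x y hxy
    have hx' : (if x ∈ F then A x else (A x)ᶜ) ∈ U := by
      by_cases h : x ∈ F
      · rw [if_pos h]; exact h
      · rcases U.mem_or_compl_mem (A x) with h' | h'
        · exact absurd h' h
        · simpa [h] using h'
    have hy' : (if y ∈ F then A y else (A y)ᶜ) ∈ U := by
      by_cases h : y ∈ F
      · rw [if_pos h]; exact h
      · rcases U.mem_or_compl_mem (A y) with h' | h'
        · exact absurd h' h
        · simpa [h] using h'
    have hmem : ({s : Finset V | x ∈ s} ∩ {s : Finset V | y ∈ s} ∩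
        ((if x ∈ F then A x else (A x)ᶜ) ∩ (if y ∈ F then A y else (A y)ᶜ))) ∈ U :=
      Filter.inter_mem (Filter.inter_mem (hatTop x) (hatTop y)) (Filter.inter_mem hx' hy')
    obtain ⟨s, hs⟩ := Filter.nonempty_of_mem hmem
    obtain ⟨⟨hxs, hys⟩, hsx, hsy⟩ := hs
    refine ⟨s, hxs, hys, ?_, ?_⟩
    · by_cases h : x ∈ F
      · simp only [h, if_pos] at hsx
        obtain ⟨h1, h2⟩ := hsx
        exact ⟨fun _ => h, fun _ => h2⟩
      · simp only [h, if_neg, not_false_iff] at hsx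
        constructor
        · intro hc
          exact absurd (⟨hxs, hc⟩ : s ∈ A x) hsx
        · intro hc; exact absurd hc h
    · by_cases h : y ∈ F
      · simp only [h, if_pos] at hsy
        obtain ⟨h1, h2⟩ := hsy
        exact ⟨fun _ => h, fun _ => h2⟩
      · simp only [h, if_neg, not_false_iff] at hsy
        constructor
        · intro hc
          exact absurd (⟨hys, hc⟩ : s ∈ A y) hsy
        · intro hc; exact absurd hc h
  refine ⟨F, ?_, ?_⟩
  · intro x hx y hy hxy
    obtain ⟨s, hxs, hys, hex, hey⟩ := key x y hxy
    have h1 : (⟨x, hxs⟩ : {z // z ∈ s}) ∈ Cs s := hex.mpr hx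
    have h2 : (⟨y, hys⟩ : {z // z ∈ s}) ∈ Cs s := hey.mpr hy
    exact hCs1 s _ h1 _ h2 (fun h => hxy (congrArg Subtype.val h))
  · intro x y hx hy hxy
    obtain ⟨s, hxs, hys, hex, hey⟩ := key x y hxy
    have h1 : (⟨x, hxs⟩ : {z // z ∈ s}) ∉ Cs s := fun h => hx (hex.mp h)
    have h2 : (⟨y, hys⟩ : {z // z ∈ s}) ∉ Cs s := fun h => hy (hey.mp h)
    exact hCs2 s _ _ h1 h2 (fun h => hxy (congrArg Subtype.val h))

/-- Every `(2K₂, C₄)`-free graph has cochromatic number at most 3: its vertex set can be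
covered by one independent set and two cliques. -/
theorem cochromatic_three_of_2K2_C4_free {V : Type*} (G : SimpleGraph V)
    (h2K2 : ¬ ∃ a b c d : V, a ≠ b ∧ a ≠ c ∧ a ≠ d ∧ b ≠ c ∧ b ≠ d ∧ c ≠ d ∧
      G.Adj a b ∧ G.Adj c d ∧ ¬ G.Adj a c ∧ ¬ G.Adj a d ∧ ¬ G.Adj b c ∧ ¬ G.Adj b d)
    (hC4 : ¬ ∃ a b c d : V, a ≠ b ∧ a ≠ c ∧ a ≠ d ∧ b ≠ c ∧ b ≠ d ∧ c ≠ d ∧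
      G.Adj a b ∧ G.Adj b c ∧ G.Adj c d ∧ G.Adj d a ∧ ¬ G.Adj a c ∧ ¬ G.Adj b d) :
    ∃ I C₁ C₂ : Set V, (∀ v, v ∈ I ∨ v ∈ C₁ ∨ v ∈ C₂) ∧
      (∀ u ∈ I, ∀ v ∈ I, u ≠ v → ¬ G.Adj u v) ∧
      (∀ u ∈ C₁, ∀ v ∈ C₁, u ≠ v → G.Adj u v) ∧
      (∀ u ∈ C₂, ∀ v ∈ C₂, u ≠ v → G.Adj u v) := by
  classical
  have two : ∀ a b c d : V, G.Adj a b → G.Adj c d → ¬ G.Adj a c → ¬ G.Adj a d →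
      ¬ G.Adj b c → ¬ G.Adj b d → a = c ∨ a = d ∨ b = c ∨ b = d := by
    intro a b c d hab hcd hac had hbc hbd
    by_contra hne
    push_neg at hne
    obtain ⟨h1, h2, h3, h4⟩ := hne
    exact h2K2 ⟨a, b, c, d, hab.ne, h1, h2, h3, h4, hcd.ne, hab, hcd, hac, had, hbc, hbd⟩
  have four : ∀ a b c d : V, a ≠ c → b ≠ d → G.Adj a b → G.Adj b c → G.Adj c d → G.Adj d a →
      ¬ G.Adj a c → ¬ G.Adj b d → False := by
    intro a b c d hac hbd hab hbc hcd hda hnac hnbd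
    exact hC4 ⟨a, b, c, d, hab.ne, hac, (hda.ne).symm, hbc.ne, hbd, hcd.ne,
      hab, hbc, hcd, hda, hnac, hnbd⟩
  by_cases h5 : ∃ a b c d e : V, a ≠ c ∧ a ≠ d ∧ b ≠ d ∧ b ≠ e ∧ c ≠ e ∧
      G.Adj a b ∧ G.Adj b c ∧ G.Adj c d ∧ G.Adj d e ∧ G.Adj e a ∧
      ¬ G.Adj a c ∧ ¬ G.Adj a d ∧ ¬ G.Adj b d ∧ ¬ G.Adj b e ∧ ¬ G.Adj c e
  · -- an induced C₅ exists: explicit construction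
    obtain ⟨c1, c2, c3, c4, c5, d13, d14, d24, d25, d35,
      a12, a23, a34, a45, a51, n13, n14, n24, n25, n35⟩ := h5
    have pat : ∀ v, v ≠ c1 → v ≠ c2 → v ≠ c3 → v ≠ c4 → v ≠ c5 →
        ((G.Adj v c1 ∧ G.Adj v c2 ∧ G.Adj v c3 ∧ G.Adj v c4 ∧ G.Adj v c5) ∨
         (¬ G.Adj v c1 ∧ ¬ G.Adj v c2 ∧ ¬ G.Adj v c3 ∧ ¬ G.Adj v c4 ∧ ¬ G.Adj v c5)) := by
      intro v e1 e2 e3 e4 e5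
      have r11 : G.Adj v c1 → G.Adj v c3 ∨ G.Adj v c4 := by
        intro hv1
        by_contra hcon
        push_neg at hcon
        rcases two v c1 c3 c4 hv1 a34 hcon.1 hcon.2 n13 n14 with h | h | h | h
        · exact e3 h
        · exact e4 h
        · exact d13 h
        · exact d14 h
      have r12 : G.Adj v c2 → G.Adj v c4 ∨ G.Adj v c5 := by
        intro hv1
        by_contra hcon
        push_neg at hcon
        rcases two v c2 c4 c5 hv1 a45 hcon.1 hcon.2 n24 n25 with h | h | h | h
        · exact e4 h
        · exact e5 h
        · exact d24 h
        · exact d25 h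
      have r13 : G.Adj v c3 → G.Adj v c5 ∨ G.Adj v c1 := by
        intro hv1
        by_contra hcon
        push_neg at hcon
        rcases two v c3 c5 c1 hv1 a51 hcon.1 hcon.2 n35 (fun h => n13 h.symm)
          with h | h | h | h
        · exact e5 h
        · exact e1 h
        · exact d35 h
        · exact d13 h.symm
      have r14 : G.Adj v c4 → G.Adj v c1 ∨ G.Adj v c2 := by
        intro hv1
        by_contra hcon
        push_neg at hcon
        rcases two v c4 c1 c2 hv1 a12 hcon.1 hcon.2 (fun h => n14 h.symm)
          (fun h => n24 h.symm) with h | h | h | h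
        · exact e1 h
        · exact e2 h
        · exact d14 h.symm
        · exact d24 h.symm
      have r15 : G.Adj v c5 → G.Adj v c2 ∨ G.Adj v c3 := by
        intro hv1
        by_contra hcon
        push_neg at hcon
        rcases two v c5 c2 c3 hv1 a23 hcon.1 hcon.2 (fun h => n25 h.symm)
          (fun h => n35 h.symm) with h | h | h | h
        · exact e2 h
        · exact e3 h
        · exact d25 h.symm
        · exact d35 h.symm
      have r21 : G.Adj v c1 → G.Adj v c3 → G.Adj v c2 := by
        intro hv1 hv3
        by_contra hv2
        exact four v c1 c2 c3 e2 d13 hv1 a12 a23 hv3.symm hv2 n13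
      have r22 : G.Adj v c2 → G.Adj v c4 → G.Adj v c3 := by
        intro hv1 hv3
        by_contra hv2
        exact four v c2 c3 c4 e3 d24 hv1 a23 a34 hv3.symm hv2 n24
      have r23 : G.Adj v c3 → G.Adj v c5 → G.Adj v c4 := by
        intro hv1 hv3
        by_contra hv2
        exact four v c3 c4 c5 e4 d35 hv1 a34 a45 hv3.symm hv2 n35
      have r24 : G.Adj v c4 → G.Adj v c1 → G.Adj v c5 := by
        intro hv1 hv3
        by_contra hv2
        exact four v c4 c5 c1 e5 (fun h => d14 h.symm) hv1 a45 a51 hv3.symm hv2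
          (fun h => n14 h.symm)
      have r25 : G.Adj v c5 → G.Adj v c2 → G.Adj v c1 := by
        intro hv1 hv3
        by_contra hv2
        exact four v c5 c1 c2 e1 (fun h => d25 h.symm) hv1 a51 a12 hv3.symm hv2
          (fun h => n25 h.symm)
      by_cases p1 : G.Adj v c1
      · left
        rcases r11 p1 with p3 | p4
        · have p2 := r21 p1 p3
          rcases r12 p2 with p4 | p5
          · exact ⟨p1, p2, p3, p4, r24 p4 p1⟩
          · exact ⟨p1, p2, p3, r23 p3 p5, p5⟩
        · have p5 := r24 p4 p1
          rcases r15 p5 with p2 | p3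
          · exact ⟨p1, p2, r22 p2 p4, p4, p5⟩
          · exact ⟨p1, r21 p1 p3, p3, p4, p5⟩
      · right
        have np3 : ¬ G.Adj v c3 := by
          intro p3
          rcases r13 p3 with p5 | hp1
          · rcases r14 (r23 p3 p5) with hp1 | p2
            · exact p1 hp1
            · exact p1 (r25 p5 p2)
          · exact p1 hp1
        have np4 : ¬ G.Adj v c4 := by
          intro p4
          rcases r14 p4 with hp1 | p2
          · exact p1 hp1
          · exact np3 (r22 p2 p4)
        have np5 : ¬ G.Adj v c5 := by
          intro p5
          rcases r15 p5 with p2 | p3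
          · exact p1 (r25 p5 p2)
          · exact np3 p3
        have np2 : ¬ G.Adj v c2 := by
          intro p2
          rcases r12 p2 with p4 | p5
          · exact np4 p4
          · exact np5 p5
        exact ⟨p1, np2, np3, np4, np5⟩
    refine ⟨{v | v = c1 ∨ v = c3 ∨ (¬ G.Adj v c1 ∧ ¬ G.Adj v c2 ∧ ¬ G.Adj v c3 ∧
        ¬ G.Adj v c4 ∧ ¬ G.Adj v c5)},
      {v | v = c4 ∨ v = c5 ∨ (G.Adj v c1 ∧ G.Adj v c2 ∧ G.Adj v c3 ∧ G.Adj v c4 ∧ G.Adj v c5)},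
      {c2}, ?_, ?_, ?_, ?_⟩
    · intro v
      by_cases e1 : v = c1
      · exact Or.inl (Or.inl e1)
      by_cases e2 : v = c2
      · exact Or.inr (Or.inr e2)
      by_cases e3 : v = c3
      · exact Or.inl (Or.inr (Or.inl e3))
      by_cases e4 : v = c4
      · exact Or.inr (Or.inl (Or.inl e4))
      by_cases e5 : v = c5
      · exact Or.inr (Or.inl (Or.inr (Or.inl e5)))
      rcases pat v e1 e2 e3 e4 e5 with h | h
      · exact Or.inr (Or.inl (Or.inr (Or.inr h)))
      · exact Or.inl (Or.inr (Or.inr h))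
    · -- independence
      intro u hu v hv huv
      rcases hu with rfl | rfl | hZu <;> rcases hv with rfl | rfl | hZv
      · exact absurd rfl huv
      · exact n13
      · exact fun h => hZv.1 h.symm
      · exact fun h => n13 h.symm
      · exact absurd rfl huv
      · exact fun h => hZv.2.2.1 h.symm
      · exact hZu.1
      · exact hZu.2.2.1
      · intro hadj
        rcases two u v c1 c2 hadj a12 hZu.1 hZu.2.1 hZv.1 hZv.2.1 with h | h | h | h
        · exact (by rw [← h] at a12; exact hZu.2.1 a12 : False)
        · exact (by rw [← h] at a12; exact hZu.1 a12.symm : False)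
        · exact (by rw [← h] at a12; exact hZv.2.1 a12 : False)
        · exact (by rw [← h] at a12; exact hZv.1 a12.symm : False)
    · -- first clique
      intro u hu v hv huv
      rcases hu with rfl | rfl | hAu <;> rcases hv with rfl | rfl | hAv
      · exact absurd rfl huv
      · exact a45
      · exact hAv.2.2.2.1.symm
      · exact a45.symm
      · exact absurd rfl huv
      · exact hAv.2.2.2.2.symm
      · exact hAu.2.2.2.1
      · exact hAu.2.2.2.2
      · by_contra hni
        exact four u c1 v c3 huv d13 hAu.1 hAv.1.symm hAv.2.2.1 hAu.2.2.1.symm hni n13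
    · -- second clique (singleton)
      intro u hu v hv huv
      simp only [Set.mem_singleton_iff] at hu hv
      subst hu; subst hv
      exact absurd rfl huv
  · -- no C₅: use the split-graph machinery
    have five : ∀ a b c d e : V, a ≠ c → a ≠ d → b ≠ d → b ≠ e → c ≠ e →
        G.Adj a b → G.Adj b c → G.Adj c d → G.Adj d e → G.Adj e a →
        ¬ G.Adj a c → ¬ G.Adj a d → ¬ G.Adj b d → ¬ G.Adj b e → ¬ G.Adj c e → False := by
      intro a b c d e hac had hbd hbe hce hab hbc hcd hde hea hnac hnad hnbd hnbe hnce
      exact h5 ⟨a, b, c, d, e, hac, had, hbd, hbe, hce, hab, hbc, hcd, hde, hea,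
        hnac, hnad, hnbd, hnbe, hnce⟩
    obtain ⟨C, hC1, hC2⟩ := transfer G two four five
    refine ⟨{v | v ∉ C}, C, ∅, ?_, ?_, ?_, ?_⟩
    · intro v
      by_cases h : v ∈ C
      · exact Or.inr (Or.inl h)
      · exact Or.inl h
    · intro u hu v hv huv
      exact hC2 u v hu hv huv
    · intro u hu v hv huv
      exact hC1 u hu v hv huv
    · intro u hu
      exact absurd hu (Set.notMem_empty u)
end

section
/- Let G = (A, B, E) be a bipartite graph containing no n disjoint induced stars nΛ_k (n stars K_{1,k} with centres in A and leaves in B, with no edges between distinct stars). Then there exists a set S ⊆ A, |S| ≤ n−1, such that every a ∈ A satisfies |N(a) \ N(S)| < k. -/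
open Finset

/-- A bipartite graph contains `n` induced disjoint stars `nΛ_k` with centres in the top
part `A` and `k` leaves each in the bottom part `B`, with no edges between distinct stars. -/
def HasStarForest {A B : Type*} (E : A → B → Prop) (n k : ℕ) : Prop :=
  ∃ (a : Fin n → A) (L : Fin n → Finset B), Function.Injective a ∧
    (∀ i j, i ≠ j → Disjoint (L i) (L j)) ∧ (∀ i, (L i).card = k) ∧
    (∀ i, ∀ b ∈ L i, E (a i) b) ∧ (∀ i j, i ≠ j → ∀ b ∈ L j, ¬ E (a i) b)

namespace StarforestAux

variable {A B : Type*} [Fintype A] [Fintype B] [DecidableEq A] [DecidableEq B]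
  (E : A → B → Prop) [∀ a b, Decidable (E a b)] (k : ℕ)

/-- Neighbourhood of a vertex. -/
def nb (a : A) : Finset B := univ.filter (fun b => E a b)

/-- Neighbourhood of a set. -/
def NS (S : Finset A) : Finset B := S.biUnion (nb E)

/-- Every member of `T` has at least `k` private neighbours. -/
def Good (T : Finset A) : Prop := ∀ t ∈ T, k ≤ ((nb E t) \ NS E (T.erase t)).card

/-- The potential function. -/
def Phi (T : Finset A) : ℤ := ((NS E T).card : ℤ) - ((k : ℤ) - 1) * T.card

lemma NS_mono {S S' : Finset A} (h : S ⊆ S') : NS E S ⊆ NS E S' :=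
  Finset.biUnion_subset_biUnion_of_subset_left _ h

lemma nb_subset_NS {s : A} {S : Finset A} (h : s ∈ S) : nb E s ⊆ NS E S :=
  Finset.subset_biUnion_of_mem _ h

lemma good_subset {U T : Finset A} (hUT : U ⊆ T) (hT : Good E k T) : Good E k U := by
  intro t ht
  refine le_trans (hT t (hUT ht)) (Finset.card_le_card ?_)
  exact Finset.sdiff_subset_sdiff (Finset.Subset.refl _)
    (NS_mono E (Finset.erase_subset_erase _ hUT))

lemma good_forest {n : ℕ} {T : Finset A} (hT : Good E k T) (hcard : T.card = n) :
    HasStarForest E n k := by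
  have e : Fin n ≃ {x // x ∈ T} := (finCongr hcard.symm).trans T.equivFin.symm
  set a : Fin n → A := fun i => (e i : A) with ha
  have hainj : Function.Injective a := fun i j h => e.injective (Subtype.ext h)
  have hamem : ∀ i, a i ∈ T := fun i => (e i).2
  have hane : ∀ i j, i ≠ j → a i ≠ a j := fun i j hij h => hij (hainj h)
  have hk' : ∀ i, k ≤ ((nb E (a i)) \ NS E (T.erase (a i))).card := fun i => hT _ (hamem i)
  choose L hL1 hL2 using fun i => Finset.exists_subset_card_eq (hk' i)
  have hmemerase : ∀ i j, i ≠ j → a i ∈ T.erase (a j) := fun i j hij =>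
    Finset.mem_erase.2 ⟨hane i j hij, hamem i⟩
  refine ⟨a, L, hainj, ?_, hL2, ?_, ?_⟩
  · intro i j hij
    rw [Finset.disjoint_left]
    intro b hbi hbj
    have h1 : b ∈ nb E (a i) := (Finset.mem_sdiff.1 (hL1 i hbi)).1
    have h2 : b ∉ NS E (T.erase (a j)) := (Finset.mem_sdiff.1 (hL1 j hbj)).2
    exact h2 (nb_subset_NS E (hmemerase i j hij) h1)
  · intro i b hb
    exact (Finset.mem_filter.1 (Finset.mem_sdiff.1 (hL1 i hb)).1).2
  · intro i j hij b hb hE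
    have h2 : b ∉ NS E (T.erase (a j)) := (Finset.mem_sdiff.1 (hL1 j hb)).2
    exact h2 (nb_subset_NS E (hmemerase i j hij)
      (Finset.mem_filter.2 ⟨Finset.mem_univ _, hE⟩))

lemma shrink (a : A) :
    ∀ (m : ℕ) (V : Finset A), V.card ≤ m → a ∈ V →
      k ≤ ((nb E a) \ NS E (V.erase a)).card →
      ∃ U, U ⊆ V ∧ a ∈ U ∧ Good E k U ∧ Phi E k V ≤ Phi E k U := by
  intro m
  induction m with
  | zero =>
    intro V hV ha _
    have : 0 < V.card := Finset.card_pos.2 ⟨a, ha⟩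
    omega
  | succ m ih =>
    intro V hV haV hpriv
    by_cases hg : Good E k V
    · exact ⟨V, Finset.Subset.refl V, haV, hg, le_refl _⟩
    · unfold Good at hg
      push_neg at hg
      obtain ⟨t, htV, hbad⟩ := hg
      have hta : t ≠ a := by
        rintro rfl
        omega
      have hcardV : 0 < V.card := Finset.card_pos.2 ⟨a, haV⟩
      have hcard' : (V.erase t).card ≤ m := by
        rw [Finset.card_erase_of_mem htV]; omega
      have haV' : a ∈ V.erase t := Finset.mem_erase.2 ⟨hta.symm, haV⟩
      have hpriv' : k ≤ ((nb E a) \ NS E ((V.erase t).erase a)).card := by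
        refine le_trans hpriv (Finset.card_le_card ?_)
        exact Finset.sdiff_subset_sdiff (Finset.Subset.refl _)
          (NS_mono E (Finset.erase_subset_erase _ (Finset.erase_subset _ _)))
      have hsub : NS E V ⊆ NS E (V.erase t) ∪ (nb E t \ NS E (V.erase t)) := by
        intro b hb
        obtain ⟨s, hsV, hbs⟩ := Finset.mem_biUnion.1 hb
        by_cases hst : s = t
        · subst hst
          by_cases hbNS : b ∈ NS E (V.erase s)
          · exact Finset.mem_union_left _ hbNS
          · exact Finset.mem_union_right _ (Finset.mem_sdiff.2 ⟨hbs, hbNS⟩)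
        · exact Finset.mem_union_left _
            (Finset.mem_biUnion.2 ⟨s, Finset.mem_erase.2 ⟨hst, hsV⟩, hbs⟩)
      have hNScard : (NS E V).card ≤ (NS E (V.erase t)).card + (k - 1) := by
        have h1 := Finset.card_le_card hsub
        have h2 := Finset.card_union_le (NS E (V.erase t)) (nb E t \ NS E (V.erase t))
        omega
      have hPhi : Phi E k V ≤ Phi E k (V.erase t) := by
        unfold Phi
        rw [Finset.card_erase_of_mem htV]
        have hk1 : 1 ≤ k := by omega
        have hc1 : ((NS E V).card : ℤ) ≤ ((NS E (V.erase t)).card : ℤ) + ((k : ℤ) - 1) := by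
          have := hNScard
          push_cast
          omega
        have hc2 : ((V.erase t).card : ℤ) = (V.card : ℤ) - 1 := by
          rw [Finset.card_erase_of_mem htV]
          push_cast
          omega
        rw [Finset.card_erase_of_mem htV] at hc2
        have : ((V.card - 1 : ℕ) : ℤ) = (V.card : ℤ) - 1 := by push_cast; omega
        rw [this]
        ring_nf
        nlinarith [hc1]
      obtain ⟨U, hUV, haU, hUgood, hphi⟩ := ih (V.erase t) hcard' haV' hpriv'
      exact ⟨U, hUV.trans (Finset.erase_subset _ _), haU, hUgood, le_trans hPhi hphi⟩

end StarforestAux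

/-- In an `nΛ_k`-free bipartite graph there is a set `S ⊆ A` with `|S| ≤ n - 1` such that
every `a ∈ A` has fewer than `k` neighbours outside `N(S)`. -/
theorem starforest_free_cover {A B : Type*} [Fintype A] [Fintype B] [DecidableEq B]
    (E : A → B → Prop) [∀ a b, Decidable (E a b)] (n k : ℕ) (hk : 1 ≤ k)
    (hfree : ¬ HasStarForest E n k) :
    ∃ S : Finset A, S.card ≤ n - 1 ∧
      ∀ a : A, ((univ.filter (fun b => E a b)) \ (S.biUnion (fun s => univ.filter (fun b => E s b)))).card < k := by
  classical
  obtain ⟨T, hTmem, hTmax⟩ :=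
    Finset.exists_max_image
      ((univ : Finset (Finset A)).filter (fun T => StarforestAux.Good E k T))
      (StarforestAux.Phi E k)
      ⟨∅, Finset.mem_filter.2 ⟨Finset.mem_univ _,
        fun t ht => absurd ht (Finset.notMem_empty t)⟩⟩
  have hTgood : StarforestAux.Good E k T := (Finset.mem_filter.1 hTmem).2
  have hTsmall : T.card < n := by
    by_contra h
    push_neg at h
    obtain ⟨T', hT'sub, hT'card⟩ := Finset.exists_subset_card_eq h
    exact hfree (StarforestAux.good_forest E k
      (StarforestAux.good_subset E k hT'sub hTgood) hT'card)
  refine ⟨T, by omega, ?_⟩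
  intro a
  by_contra hcon
  push_neg at hcon
  have hcon' : k ≤ ((StarforestAux.nb E a) \ StarforestAux.NS E T).card := by
    exact hcon
  have haT : a ∉ T := by
    intro haT
    have hsub : StarforestAux.nb E a ⊆ StarforestAux.NS E T :=
      StarforestAux.nb_subset_NS E haT
    have hemp : ((StarforestAux.nb E a) \ StarforestAux.NS E T) = ∅ :=
      Finset.sdiff_eq_empty_iff_subset.2 hsub
    rw [hemp] at hcon'
    simp at hcon'
    omega
  obtain ⟨U, hUV, haU, hUgood, hphi⟩ :=
    StarforestAux.shrink E k a (insert a T).card (insert a T) le_rfl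
      (Finset.mem_insert_self a T)
      (by rw [Finset.erase_insert haT]; exact hcon')
  have hUle : StarforestAux.Phi E k U ≤ StarforestAux.Phi E k T :=
    hTmax U (Finset.mem_filter.2 ⟨Finset.mem_univ _, hUgood⟩)
  have hNS : (StarforestAux.NS E (insert a T)).card
      = ((StarforestAux.nb E a) \ StarforestAux.NS E T).card
        + (StarforestAux.NS E T).card := by
    rw [StarforestAux.NS, Finset.biUnion_insert]
    exact (Finset.card_sdiff_add_card _ _).symm
  have hcardins : (insert a T).card = T.card + 1 := Finset.card_insert_of_notMem haT
  have hgap : StarforestAux.Phi E k T + 1 ≤ StarforestAux.Phi E k (insert a T) := by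
    unfold StarforestAux.Phi
    rw [hNS, hcardins]
    push_cast
    have : (k : ℤ) ≤ ((StarforestAux.nb E a \ StarforestAux.NS E T).card : ℤ) := by
      exact_mod_cast hcon'
    nlinarith
  have := le_trans hgap (le_trans hphi hUle)
  omega
end

section
/- Let G = (A, B, E) be a bipartite nΛ_k-free graph in which every vertex of B has degree at most d. Then at most nkd² vertices of A have degree at least k. -/
open Finset

section
variable {α : Type*} [DecidableEq α]

lemma sum_filter_swap' (T : Finset α) (p : α → α → Prop) [∀ a b, Decidable (p a b)] :
    ∑ a ∈ T, (T.filter (fun b => p a b)).card = ∑ b ∈ T, (T.filter (fun a => p a b)).card := by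
  simp_rw [Finset.card_filter]
  exact Finset.sum_comm

lemma indep_lemma (C : α → α → Prop) [DecidableRel C]
    (hsymm : ∀ a b, C a b → C b a) (D : ℕ) (P : Finset α)
    (hdeg : ∀ T ⊆ P, T.Nonempty → ∃ a ∈ T, (T.filter (C a)).card ≤ D) :
    ∀ T ⊆ P, ∃ I ⊆ T, (∀ a ∈ I, ∀ b ∈ I, a ≠ b → ¬ C a b) ∧ T.card ≤ (D+1) * I.card := by
  intro T
  induction T using Finset.strongInduction with
  | _ T ih =>
    intro hTP
    rcases T.eq_empty_or_nonempty with rfl | hne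
    · exact ⟨∅, by simp, by simp, by simp⟩
    · obtain ⟨a, haT, ha⟩ := hdeg T hTP hne
      set T' := (T.erase a).filter (fun x => ¬ C a x) with hT'def
      have hT'sub : T' ⊆ T := (Finset.filter_subset _ _).trans (Finset.erase_subset _ _)
      have hT'ssub : T' ⊂ T := by
        refine Finset.ssubset_iff_of_subset hT'sub |>.mpr ⟨a, haT, ?_⟩
        simp [hT'def]
      obtain ⟨I, hIT', hind, hcard⟩ := ih T' hT'ssub (hT'sub.trans hTP)
      have haI : a ∉ I := fun h => by
        have := hIT' h
        simp [hT'def, Finset.mem_filter, Finset.mem_erase] at this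
      refine ⟨insert a I, ?_, ?_, ?_⟩
      · exact Finset.insert_subset haT (hIT'.trans hT'sub)
      · intro x hx y hy hxy
        simp only [Finset.mem_insert] at hx hy
        have key : ∀ z ∈ I, ¬ C a z := fun z hz => (Finset.mem_filter.mp (hIT' hz)).2
        rcases hx with rfl | hx <;> rcases hy with rfl | hy
        · exact absurd rfl hxy
        · exact key y hy
        · exact fun h => key x hx (hsymm _ _ h)
        · exact hind x hx y hy hxy
      · have hdiff : T \ T' ⊆ insert a (T.filter (C a)) := by
          intro x hx
          obtain ⟨hxT, hxT'⟩ := Finset.mem_sdiff.mp hx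
          simp only [hT'def, Finset.mem_filter, Finset.mem_erase, not_and, not_not] at hxT'
          rcases eq_or_ne x a with rfl | hxa
          · exact Finset.mem_insert_self _ _
          · exact Finset.mem_insert_of_mem (Finset.mem_filter.mpr ⟨hxT, hxT' ⟨hxa, hxT⟩⟩)
        have h1 : (T \ T').card ≤ D + 1 := by
          calc (T \ T').card ≤ (insert a (T.filter (C a))).card := Finset.card_le_card hdiff
            _ ≤ (T.filter (C a)).card + 1 := Finset.card_insert_le _ _
            _ ≤ D + 1 := by omega
        have h2 : (T \ T').card = T.card - T'.card := Finset.card_sdiff_of_subset hT'sub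
        have h3 : T'.card ≤ T.card := Finset.card_le_card hT'sub
        have h4 : (insert a I).card = I.card + 1 := Finset.card_insert_of_notMem haI
        have : T.card ≤ T'.card + (D + 1) := by omega
        calc T.card ≤ T'.card + (D+1) := this
          _ ≤ (D+1) * I.card + (D+1) := by omega
          _ = (D+1) * (I.card + 1) := by ring
          _ = (D+1) * (insert a I).card := by rw [h4]
end

/-- In an `nΛ_k`-free bipartite graph whose bottom vertices all have degree at most `d`,
at most `nkd²` top vertices have degree at least `k`. -/
theorem starforest_free_bounded_degree {A B : Type*} [Fintype A] [Fintype B]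
    (E : A → B → Prop) [∀ a b, Decidable (E a b)] (n k d : ℕ) (hk : 1 ≤ k)
    (hfree : ¬ HasStarForest E n k)
    (hdeg : ∀ b : B, (univ.filter (fun a => E a b)).card ≤ d) :
    (univ.filter (fun a : A => k ≤ (univ.filter (fun b => E a b)).card)).card ≤ n * k * d ^ 2 := by
  classical
  by_contra hbig
  push_neg at hbig
  set S := univ.filter (fun a : A => k ≤ (univ.filter (fun b => E a b)).card) with hSdef
  have hScard : n * k * d ^ 2 < S.card := hbig
  have hSmem : ∀ a ∈ S, k ≤ (univ.filter (fun b => E a b)).card := by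
    intro a ha; exact (Finset.mem_filter.mp ha).2
  -- d ≥ 1
  have hd : 1 ≤ d := by
    obtain ⟨a, haS⟩ := Finset.card_pos.mp (by omega : 0 < S.card)
    obtain ⟨b, hb⟩ := Finset.card_pos.mp (lt_of_lt_of_le hk (hSmem a haS))
    have hab : E a b := (Finset.mem_filter.mp hb).2
    have : a ∈ univ.filter (fun a' => E a' b) := Finset.mem_filter.mpr ⟨Finset.mem_univ _, hab⟩
    calc 1 ≤ (univ.filter (fun a' => E a' b)).card := Finset.card_pos.mpr ⟨a, this⟩
      _ ≤ d := hdeg b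
  -- choose k leaves for each vertex in S
  have hLex : ∀ a, a ∈ S → ∃ t ⊆ univ.filter (fun b => E a b), t.card = k :=
    fun a ha => Finset.exists_subset_card_eq (hSmem a ha)
  choose! L hL1 hL2 using hLex
  have hLE : ∀ a ∈ S, ∀ b ∈ L a, E a b := by
    intro a ha b hb
    exact (Finset.mem_filter.mp (hL1 a ha hb)).2
  set R : A → A → Prop := fun a b => ∃ c ∈ L a, E b c with hRdef
  set C : A → A → Prop := fun a b => a ≠ b ∧ (R a b ∨ R b a) with hCdef
  have hsymm : ∀ a b, C a b → C b a := by
    rintro a b ⟨hne, h⟩; exact ⟨hne.symm, h.symm⟩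
  -- out-degree bound
  have hout : ∀ a ∈ S, ∀ T : Finset A,
      (T.filter (fun b => b ≠ a ∧ R a b)).card ≤ k * (d - 1) := by
    intro a ha T
    have hsub : T.filter (fun b => b ≠ a ∧ R a b) ⊆
        (L a).biUnion (fun c => (univ.filter (fun x => E x c)).erase a) := by
      intro x hx
      obtain ⟨hxT, hxa, c, hc, hEc⟩ := Finset.mem_filter.mp hx
      refine Finset.mem_biUnion.mpr ⟨c, hc, ?_⟩
      exact Finset.mem_erase.mpr ⟨hxa, Finset.mem_filter.mpr ⟨Finset.mem_univ _, hEc⟩⟩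
    calc (T.filter (fun b => b ≠ a ∧ R a b)).card
        ≤ ((L a).biUnion (fun c => (univ.filter (fun x => E x c)).erase a)).card :=
          Finset.card_le_card hsub
      _ ≤ ∑ c ∈ L a, ((univ.filter (fun x => E x c)).erase a).card :=
          Finset.card_biUnion_le
      _ ≤ ∑ c ∈ L a, (d - 1) := by
          refine Finset.sum_le_sum ?_
          intro c hc
          have haN : a ∈ univ.filter (fun x => E x c) :=
            Finset.mem_filter.mpr ⟨Finset.mem_univ _, hLE a ha c hc⟩
          rw [Finset.card_erase_of_mem haN]
          have := hdeg c
          omega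
      _ = k * (d - 1) := by rw [Finset.sum_const, hL2 a ha, smul_eq_mul]
  -- min-degree bound for the conflict graph
  have hdeg' : ∀ T ⊆ S, T.Nonempty → ∃ a ∈ T, (T.filter (C a)).card ≤ 2 * (k * (d - 1)) := by
    intro T hTS hTne
    have hsum : ∑ a ∈ T, (T.filter (C a)).card ≤ ∑ _a ∈ T, 2 * (k * (d - 1)) := by
      have hsplit : ∀ a ∈ T, (T.filter (C a)).card ≤
          (T.filter (fun b => a ≠ b ∧ R a b)).card + (T.filter (fun b => a ≠ b ∧ R b a)).card := by
        intro a _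
        have : T.filter (C a) ⊆
            T.filter (fun b => a ≠ b ∧ R a b) ∪ T.filter (fun b => a ≠ b ∧ R b a) := by
          intro x hx
          obtain ⟨hxT, hne, hor⟩ := Finset.mem_filter.mp hx
          rcases hor with h | h
          · exact Finset.mem_union_left _ (Finset.mem_filter.mpr ⟨hxT, hne, h⟩)
          · exact Finset.mem_union_right _ (Finset.mem_filter.mpr ⟨hxT, hne, h⟩)
        calc (T.filter (C a)).card ≤ _ := Finset.card_le_card this
          _ ≤ _ := Finset.card_union_le _ _
      calc ∑ a ∈ T, (T.filter (C a)).card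
          ≤ ∑ a ∈ T, ((T.filter (fun b => a ≠ b ∧ R a b)).card
              + (T.filter (fun b => a ≠ b ∧ R b a)).card) := Finset.sum_le_sum hsplit
        _ = ∑ a ∈ T, (T.filter (fun b => a ≠ b ∧ R a b)).card
              + ∑ a ∈ T, (T.filter (fun b => a ≠ b ∧ R b a)).card := Finset.sum_add_distrib
        _ = ∑ a ∈ T, (T.filter (fun b => a ≠ b ∧ R a b)).card
              + ∑ b ∈ T, (T.filter (fun a => a ≠ b ∧ R b a)).card := by
            rw [sum_filter_swap' T (fun a b => a ≠ b ∧ R b a)]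
        _ ≤ ∑ _a ∈ T, (k * (d-1)) + ∑ _b ∈ T, (k * (d-1)) := by
            gcongr with a haT b hbT
            · calc (T.filter (fun b => a ≠ b ∧ R a b)).card
                  ≤ (T.filter (fun b => b ≠ a ∧ R a b)).card := by
                    refine Finset.card_le_card ?_
                    intro x hx
                    obtain ⟨hxT, h1, h2⟩ := Finset.mem_filter.mp hx
                    exact Finset.mem_filter.mpr ⟨hxT, h1.symm, h2⟩
                _ ≤ k * (d - 1) := hout a (hTS haT) T
            · exact hout b (hTS hbT) T
        _ = ∑ _a ∈ T, 2 * (k * (d - 1)) := by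
            rw [← Finset.sum_add_distrib]; congr 1; ext; ring
    exact Finset.exists_le_of_sum_le hTne hsum
  obtain ⟨I, hIS, hind, hIcard⟩ := indep_lemma C hsymm (2 * (k * (d-1))) S hdeg' S le_rfl
  -- arithmetic: n < I.card
  have hfac : 2 * (k * (d - 1)) + 1 ≤ k * d ^ 2 := by
    obtain ⟨e, rfl⟩ := Nat.exists_eq_add_of_le hd
    simp only [Nat.add_sub_cancel_left] at *
    have h0 : 1 ≤ k + k * e ^ 2 := le_trans hk (Nat.le_add_right _ _)
    calc 2 * (k * e) + 1 ≤ 2 * (k * e) + (k + k * e ^ 2) := by omega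
      _ = k * (1 + e) ^ 2 := by ring
  have hn : n < I.card := by
    have h1 : n * k * d ^ 2 < (k * d ^ 2) * I.card := by
      calc n * k * d ^ 2 < S.card := hScard
        _ ≤ (2 * (k * (d-1)) + 1) * I.card := hIcard
        _ ≤ (k * d ^ 2) * I.card := Nat.mul_le_mul_right _ hfac
    have h2 : (k * d ^ 2) * n < (k * d ^ 2) * I.card := by
      calc (k * d ^ 2) * n = n * k * d ^ 2 := by ring
        _ < (k * d ^ 2) * I.card := h1
    exact Nat.lt_of_mul_lt_mul_left h2
  obtain ⟨J, hJI, hJcard⟩ := Finset.exists_subset_card_eq hn.le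
  apply hfree
  set f : Fin n → A := fun i => ((J.equivFin.symm (Fin.cast hJcard.symm i)) : A) with hfdef
  have hfJ : ∀ i, f i ∈ J := fun i => (J.equivFin.symm (Fin.cast hJcard.symm i)).2
  have hfI : ∀ i, f i ∈ I := fun i => hJI (hfJ i)
  have hfS : ∀ i, f i ∈ S := fun i => hIS (hfI i)
  have hfinj : Function.Injective f := by
    intro i j h
    have := J.equivFin.symm.injective (Subtype.coe_injective h)
    exact Fin.cast_injective _ this
  have hnoC : ∀ i j : Fin n, i ≠ j → ¬ C (f i) (f j) := by
    intro i j hij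
    exact hind (f i) (hfI i) (f j) (hfI j) (fun h => hij (hfinj h))
  have hnoR : ∀ i j : Fin n, i ≠ j → ¬ R (f i) (f j) := by
    intro i j hij hR
    exact hnoC i j hij ⟨fun h => hij (hfinj h), Or.inl hR⟩
  refine ⟨f, fun i => L (f i), hfinj, ?_, fun i => hL2 (f i) (hfS i), fun i => hLE (f i) (hfS i), ?_⟩
  · intro i j hij
    rw [Finset.disjoint_left]
    intro b hbi hbj
    dsimp only at hbi hbj
    exact hnoR j i (fun h => hij h.symm) ⟨b, hbj, hLE (f i) (hfS i) b hbi⟩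
  · intro i j hij b hbj hE
    dsimp only at hbj
    exact hnoR j i (fun h => hij h.symm) ⟨b, hbj, hE⟩
end

section
/- Let s ≥ 1 and let G = (A, B, E) be a bipartite graph not containing two induced disjoint stars 2Λ_s with centres in A. Order A = {a₁, …, a_q} so that |N(a₁)| ≤ |N(a₂)| ≤ … ≤ |N(a_q)|. Then for every i ≥ 2, |N(a_{i−1}) \ N(a_i)| < s. -/
open Finset

/-- A bipartite graph contains two induced disjoint stars `2Λ_s` with centres in the top
part `A`: distinct `a, a'` with disjoint leaf sets `B₁, B₂ ⊆ B` of size `s`, where `a` is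
complete to `B₁` and anticomplete to `B₂`, and `a'` vice versa. -/
def HasTwoStars {A B : Type*} (E : A → B → Prop) (s : ℕ) : Prop :=
  ∃ (a a' : A) (B₁ B₂ : Finset B), a ≠ a' ∧ Disjoint B₁ B₂ ∧ B₁.card = s ∧ B₂.card = s ∧
    (∀ b ∈ B₁, E a b) ∧ (∀ b ∈ B₂, ¬ E a b) ∧ (∀ b ∈ B₂, E a' b) ∧ (∀ b ∈ B₁, ¬ E a' b)

/-- In a `2Λ_s`-free bipartite graph, if `A = {a₁, …, a_q}` is ordered by nondecreasing
degree, then consecutive vertices satisfy `|N(a_{i-1}) \ N(a_i)| < s`. -/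
theorem twostars_free_consecutive_diff {A B : Type*} [Fintype B] [DecidableEq B]
    (E : A → B → Prop) [∀ a b, Decidable (E a b)] (s : ℕ) (hs : 1 ≤ s)
    (hfree : ¬ HasTwoStars E s) (q : ℕ) (a : Fin q → A) (hbij : Function.Bijective a)
    (hmono : ∀ i j : Fin q, i ≤ j →
      (univ.filter (fun b => E (a i) b)).card ≤ (univ.filter (fun b => E (a j) b)).card) :
    ∀ (i : ℕ) (h : i + 1 < q),
      ((univ.filter (fun b => E (a ⟨i, Nat.lt_of_succ_lt h⟩) b)) \
        (univ.filter (fun b => E (a ⟨i + 1, h⟩) b))).card < s := by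
  intro i h
  by_contra hc
  push_neg at hc
  set i1 : Fin q := ⟨i, Nat.lt_of_succ_lt h⟩
  set i2 : Fin q := ⟨i + 1, h⟩
  set X := univ.filter (fun b => E (a i1) b) with hX
  set Y := univ.filter (fun b => E (a i2) b) with hY
  have hle : X.card ≤ Y.card := hmono i1 i2 (by simp [i1, i2])
  have h1 : (X \ Y).card + (X ∩ Y).card = X.card := Finset.card_sdiff_add_card_inter X Y
  have h2 : (Y \ X).card + (Y ∩ X).card = Y.card := Finset.card_sdiff_add_card_inter Y X
  have hIC : (X ∩ Y).card = (Y ∩ X).card := by rw [Finset.inter_comm]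
  have hYX : s ≤ (Y \ X).card := by omega
  obtain ⟨B₁, hB₁s, hB₁c⟩ := Finset.exists_subset_card_eq hc
  obtain ⟨B₂, hB₂s, hB₂c⟩ := Finset.exists_subset_card_eq hYX
  apply hfree
  refine ⟨a i1, a i2, B₁, B₂, ?_, ?_, hB₁c, hB₂c, ?_, ?_, ?_, ?_⟩
  · intro hEq
    have := hbij.injective hEq
    simp [i1, i2, Fin.ext_iff] at this
  · exact Finset.disjoint_of_subset_left hB₁s
      (Finset.disjoint_of_subset_right hB₂s (Finset.sdiff_disjoint.mono_right Finset.sdiff_subset))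
  · intro b hb
    have := hB₁s hb
    simp [X] at this
    exact this.1
  · intro b hb
    have := hB₂s hb
    simp [X, Y] at this
    exact this.2
  · intro b hb
    have := hB₂s hb
    simp [Y] at this
    exact this.1
  · intro b hb
    have := hB₁s hb
    simp [X, Y] at this
    exact this.2
end

section
/- Let s ≥ 1 and let G = (A, B, E) be a bipartite graph on n vertices total not containing 2Λ_s (two induced disjoint stars with centres in A and s leaves each). Order A = {a₁, …, a_q} with |N(a₁)| ≤ … ≤ |N(a_q)|. Then |N(a₁)| + Σ_{i=2}^{q} |N(aᵢ) △ N(a_{i−1})| + q ≤ 2sn. -/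
open Finset

/-- Telescoping bound. -/
lemma tele_aux (k : ℕ) : ∀ (q : ℕ) (c : Fin (q+1) → ℕ) (d : Fin q → ℕ),
    (∀ i : Fin q, c i.castSucc + d i ≤ c i.succ + k) →
    c 0 + ∑ i, d i ≤ c (Fin.last q) + q * k := by
  intro q
  induction q with
  | zero => intro c d _; simp [Fin.last]
  | succ q ih =>
    intro c d h
    have h1 : c ((0 : Fin (q+1)).castSucc) + ∑ i : Fin q, d i.castSucc ≤
        c ((Fin.last q).castSucc) + q * k :=
      ih (fun i => c i.castSucc) (fun i => d i.castSucc) (fun i => by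
        have := h i.castSucc
        simpa only [Fin.succ_castSucc] using this)
    have h2 := h (Fin.last q)
    have hlast : (Fin.last q).succ = Fin.last (q+1) := rfl
    have hsum : ∑ i : Fin (q+1), d i = (∑ i : Fin q, d i.castSucc) + d (Fin.last q) :=
      Fin.sum_univ_castSucc d
    have h0 : ((0 : Fin (q+1)).castSucc : Fin (q+2)) = 0 := rfl
    rw [hsum, ← hlast]
    rw [h0] at h1
    have : (q+1) * k = q * k + k := by ring
    omega

/-- In a `2Λ_s`-free bipartite graph on `n` vertices with `A = {a₁, …, a_{q+1}}` ordered by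
nondecreasing degree, the encoding length
`|N(a₁)| + Σᵢ |N(aᵢ₊₁) △ N(aᵢ)| + (q+1)` is at most `2sn`. -/
theorem twostars_free_encoding_length {A B : Type*} [Fintype A] [Fintype B] [DecidableEq B]
    (E : A → B → Prop) [∀ a b, Decidable (E a b)] (s n : ℕ) (hs : 1 ≤ s)
    (hfree : ¬ HasTwoStars E s) (hn : Fintype.card A + Fintype.card B = n)
    (q : ℕ) (a : Fin (q + 1) → A) (hbij : Function.Bijective a)
    (hmono : ∀ i j : Fin (q + 1), i ≤ j →
      (univ.filter (fun b => E (a i) b)).card ≤ (univ.filter (fun b => E (a j) b)).card) :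
    (univ.filter (fun b => E (a 0) b)).card +
      (∑ i : Fin q,
        (((univ.filter (fun b => E (a i.succ) b)) \ (univ.filter (fun b => E (a i.castSucc) b))) ∪
          ((univ.filter (fun b => E (a i.castSucc) b)) \ (univ.filter (fun b => E (a i.succ) b)))).card) +
      (q + 1) ≤ 2 * s * n := by
  set N : Fin (q+1) → Finset B := fun i => univ.filter (fun b => E (a i) b) with hN
  -- key: consecutive backward difference is small
  have hkey : ∀ i : Fin q, (N i.castSucc \ N i.succ).card + 1 ≤ s := by
    intro i
    by_contra hcon
    push_neg at hcon
    have hss : s ≤ (N i.castSucc \ N i.succ).card := by omega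
    have hle : (N i.castSucc).card ≤ (N i.succ).card :=
      hmono _ _ (le_of_lt (Fin.castSucc_lt_succ (i := i)))
    have e1 := card_sdiff_add_card_inter (N i.castSucc) (N i.succ)
    have e2 := card_sdiff_add_card_inter (N i.succ) (N i.castSucc)
    rw [inter_comm] at e2
    have hss' : s ≤ (N i.succ \ N i.castSucc).card := by omega
    obtain ⟨B₂, hB₂sub, hB₂card⟩ := Finset.exists_subset_card_eq hss
    obtain ⟨B₁, hB₁sub, hB₁card⟩ := Finset.exists_subset_card_eq hss'
    apply hfree
    refine ⟨a i.succ, a i.castSucc, B₁, B₂, ?_, ?_, hB₁card, hB₂card, ?_, ?_, ?_, ?_⟩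
    · intro h
      have := hbij.injective h
      exact absurd this (Fin.castSucc_lt_succ (i := i)).ne'
    · refine Finset.disjoint_left.2 fun b hb1 hb2 => ?_
      have h1 := hB₁sub hb1
      have h2 := hB₂sub hb2
      simp only [mem_sdiff] at h1 h2
      exact h2.2 h1.1
    · intro b hb
      have := hB₁sub hb
      simp only [hN, mem_sdiff, mem_filter, mem_univ, true_and] at this
      exact this.1
    · intro b hb
      have := hB₂sub hb
      simp only [hN, mem_sdiff, mem_filter, mem_univ, true_and] at this
      exact this.2
    · intro b hb
      have := hB₂sub hb
      simp only [hN, mem_sdiff, mem_filter, mem_univ, true_and] at this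
      exact this.1
    · intro b hb
      have := hB₁sub hb
      simp only [hN, mem_sdiff, mem_filter, mem_univ, true_and] at this
      exact this.2
  -- per-step inequality
  have hstep : ∀ i : Fin q,
      (N i.castSucc).card + ((N i.succ \ N i.castSucc) ∪ (N i.castSucc \ N i.succ)).card
        ≤ (N i.succ).card + 2 * (s - 1) := by
    intro i
    have hdisj : Disjoint (N i.succ \ N i.castSucc) (N i.castSucc \ N i.succ) :=
      disjoint_sdiff_sdiff
    rw [card_union_of_disjoint hdisj]
    have e1 := card_sdiff_add_card_inter (N i.castSucc) (N i.succ)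
    have e2 := card_sdiff_add_card_inter (N i.succ) (N i.castSucc)
    rw [inter_comm] at e2
    have hk := hkey i
    omega
  have htele := tele_aux (2 * (s - 1)) q (fun i => (N i).card)
    (fun i => ((N i.succ \ N i.castSucc) ∪ (N i.castSucc \ N i.succ)).card) hstep
  have hlast : (N (Fin.last q)).card ≤ Fintype.card B := by
    simpa using (card_filter_le univ (fun b => E (a (Fin.last q)) b))
  have hA : Fintype.card A = q + 1 := by
    rw [← Fintype.card_fin (q+1)]
    exact (Fintype.card_of_bijective hbij).symm
  have hn' : q + 1 + Fintype.card B = n := by rw [← hA]; exact hn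
  have hB1 : Fintype.card B ≤ 2 * s * Fintype.card B := by nlinarith
  obtain ⟨t, rfl⟩ : ∃ t, s = t + 1 := ⟨s - 1, by omega⟩
  have htele' : (N 0).card +
      (∑ i : Fin q, ((N i.succ \ N i.castSucc) ∪ (N i.castSucc \ N i.succ)).card) ≤
      (N (Fin.last q)).card + q * (2 * (t + 1 - 1)) := htele
  have ht : t + 1 - 1 = t := rfl
  rw [ht] at htele'
  show (N 0).card +
      (∑ i : Fin q, ((N i.succ \ N i.castSucc) ∪ (N i.castSucc \ N i.succ)).card) +
      (q + 1) ≤ 2 * (t + 1) * n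
  rw [← hn']
  nlinarith [htele', hlast]
end

section
/- For any fixed s ≥ 1, the number of labelled bipartite graphs on vertex set {1,…,n} (with a given bipartition) that contain no induced 2Λ_s is at most (2n)^{2sn}. -/
open Finset Function

set_option linter.unusedSectionVars false

namespace TwoStars

variable {n : ℕ}

def NN (f : Fin n → Fin n → Bool) (a : Fin n) : Finset (Fin n) :=
  Finset.univ.filter (fun b => f a b = true)

lemma mem_NN {f : Fin n → Fin n → Bool} {a b : Fin n} : b ∈ NN f a ↔ f a b = true := by
  simp [NN]

def keyy (f : Fin n → Fin n → Bool) (a : Fin n) : ℕ := (NN f a).card * n + a.val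

variable [NeZero n]

def amax (f : Fin n → Fin n → Bool) (A : Finset (Fin n)) (h : A.Nonempty) : Fin n :=
  ⟨(A.image (keyy f)).max' (h.image _) % n, Nat.mod_lt _ (NeZero.pos n)⟩

lemma amax_eq (f : Fin n → Fin n → Bool) {A : Finset (Fin n)} (h : A.Nonempty) :
    ∃ a ∈ A, amax f A h = a ∧ ∀ x ∈ A, keyy f x ≤ keyy f a := by
  obtain ⟨a, ha, hk⟩ := Finset.mem_image.1 ((A.image (keyy f)).max'_mem (h.image _))
  have hmod : keyy f a % n = a.val := by
    rw [keyy, Nat.add_comm, Nat.add_mul_mod_self_right]; exact Nat.mod_eq_of_lt a.isLt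
  refine ⟨a, ha, ?_, ?_⟩
  · apply Fin.ext
    show (A.image (keyy f)).max' _ % n = a.val
    rw [← hk, hmod]
  · intro x hx
    rw [hk]
    exact Finset.le_max' _ _ (Finset.mem_image_of_mem _ hx)

lemma amax_mem (f : Fin n → Fin n → Bool) {A : Finset (Fin n)} (h : A.Nonempty) :
    amax f A h ∈ A := by
  obtain ⟨a, ha, he, _⟩ := amax_eq f h
  rw [he]; exact ha

lemma le_key_amax (f : Fin n → Fin n → Bool) {A : Finset (Fin n)} (h : A.Nonempty)
    {x : Fin n} (hx : x ∈ A) : keyy f x ≤ keyy f (amax f A h) := by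
  obtain ⟨a, _, he, hmax⟩ := amax_eq f h
  rw [he]; exact hmax x hx

lemma card_le_of_key_le {f : Fin n → Fin n → Bool} {x y : Fin n}
    (h : keyy f x ≤ keyy f y) : (NN f x).card ≤ (NN f y).card := by
  by_contra hc
  push_neg at hc
  have h1 : (NN f y).card * n + n ≤ (NN f x).card * n := by
    rw [← Nat.succ_mul]; exact Nat.mul_le_mul_right _ hc
  have h2 : keyy f y < keyy f x := by
    unfold keyy
    have := y.isLt
    omega
  omega


def top (f : Fin n → Fin n → Bool) (A : Finset (Fin n)) : Finset (Fin n) :=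
  if h : A.Nonempty then NN f (amax f A h) else ∅

def ops (T Na : Finset (Fin n)) : List (Fin n × Bool) :=
  ((T \ Na).sort (· ≤ ·) ++ (Na \ T).sort (· ≤ ·)).map (fun b => (b, false))

def enc (f : Fin n → Fin n → Bool) (A : Finset (Fin n)) : List (Fin n × Bool) :=
  if h : A.Nonempty then
    enc f (A.erase (amax f A h)) ++ (amax f A h, true) ::
      ops (top f (A.erase (amax f A h))) (NN f (amax f A h))
  else []
termination_by A.card
decreasing_by exact Finset.card_erase_lt_of_mem (amax_mem f h)

abbrev St (n : ℕ) := Finset (Fin n) × (Fin n → Finset (Fin n)) × Option (Fin n)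

def recd (g : Fin n → Finset (Fin n)) (c : Option (Fin n)) (S : Finset (Fin n)) :
    Fin n → Finset (Fin n) :=
  match c with
  | none => g
  | some a => Function.update g a S

def tog (S : Finset (Fin n)) (v : Fin n) : Finset (Fin n) :=
  if v ∈ S then S.erase v else insert v S

def step : St n → (Fin n × Bool) → St n := fun st t =>
  if t.2 then (st.1, recd st.2.1 st.2.2 st.1, some t.1) else (tog st.1 t.1, st.2.1, st.2.2)

def run (l : List (Fin n × Bool)) (st : St n) : St n := l.foldl step st

def finish (st : St n) : Fin n → Finset (Fin n) := recd st.2.1 st.2.2 st.1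

def st0 : St n := (∅, fun _ => ∅, none)

lemma run_append (l₁ l₂ : List (Fin n × Bool)) (st : St n) :
    run (l₁ ++ l₂) st = run l₂ (run l₁ st) := List.foldl_append

lemma run_cons (t : Fin n × Bool) (l : List (Fin n × Bool)) (st : St n) :
    run (t :: l) st = run l (step st t) := rfl

lemma run_falseTokens (bs : List (Fin n)) :
    ∀ (S : Finset (Fin n)) (g : Fin n → Finset (Fin n)) (c : Option (Fin n)),
    run (bs.map (fun b => (b, false))) (S, g, c) = (bs.foldl tog S, g, c) := by
  induction bs with
  | nil => intro S g c; rfl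
  | cons b bs ih =>
    intro S g c
    simp only [List.map_cons, run_cons, List.foldl_cons]
    have : step (S, g, c) (b, false) = (tog S b, g, c) := by simp [step]
    rw [this, ih]

lemma fold_tog_del (l : List (Fin n)) :
    ∀ S : Finset (Fin n), l.Nodup → (∀ v ∈ l, v ∈ S) → l.foldl tog S = S \ l.toFinset := by
  induction l with
  | nil => intro S _ _; simp
  | cons v l ih =>
    intro S hnd hsub
    simp only [List.foldl_cons]
    have hv : v ∈ S := hsub v (by simp)
    have h1 : tog S v = S.erase v := by simp [tog, hv]
    rw [h1, ih _ (List.nodup_cons.1 hnd).2 (fun x hx => Finset.mem_erase.2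
      ⟨fun he => (List.nodup_cons.1 hnd).1 (by rw [← he]; exact hx), hsub x (by simp [hx])⟩)]
    ext x
    simp only [Finset.mem_sdiff, Finset.mem_erase, List.toFinset_cons, Finset.mem_insert,
      List.mem_toFinset]
    tauto

lemma fold_tog_add (l : List (Fin n)) :
    ∀ S : Finset (Fin n), l.Nodup → (∀ v ∈ l, v ∉ S) → l.foldl tog S = S ∪ l.toFinset := by
  induction l with
  | nil => intro S _ _; simp
  | cons v l ih =>
    intro S hnd hsub
    simp only [List.foldl_cons]
    have hv : v ∉ S := hsub v (by simp)
    have h1 : tog S v = insert v S := by simp [tog, hv]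
    rw [h1, ih _ (List.nodup_cons.1 hnd).2 (fun x hx hmem => by
      rcases Finset.mem_insert.1 hmem with he | hx'
      · exact (List.nodup_cons.1 hnd).1 (by rw [← he]; exact hx)
      · exact hsub x (by simp [hx]) hx')]
    ext x
    simp only [Finset.mem_union, Finset.mem_insert, List.toFinset_cons, List.mem_toFinset]
    tauto

lemma run_ops (T Na : Finset (Fin n)) (g : Fin n → Finset (Fin n)) (c : Option (Fin n)) :
    run (ops T Na) (T, g, c) = (Na, g, c) := by
  rw [ops, List.map_append, run_append, run_falseTokens, run_falseTokens]
  have h1 : ((T \ Na).sort (· ≤ ·)).foldl tog T = T ∩ Na := by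
    rw [fold_tog_del _ _ (Finset.sort_nodup _ _)
      (fun v hv => (Finset.mem_sdiff.1 ((Finset.mem_sort _).1 hv)).1)]
    rw [Finset.sort_toFinset]
    exact Finset.sdiff_sdiff_self_left T Na
  have h2 : ((Na \ T).sort (· ≤ ·)).foldl tog (T ∩ Na) = Na := by
    rw [fold_tog_add _ _ (Finset.sort_nodup _ _)
      (fun v hv hm => (Finset.mem_sdiff.1 ((Finset.mem_sort _).1 hv)).2
        (Finset.mem_inter.1 hm).1)]
    rw [Finset.sort_toFinset, Finset.inter_comm]
    ext x
    simp only [Finset.mem_union, Finset.mem_inter, Finset.mem_sdiff]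
    tauto
  rw [h1, h2]

def gspec (f : Fin n → Fin n → Bool) (A : Finset (Fin n)) : Fin n → Finset (Fin n) :=
  fun x => if x ∈ A then NN f x else ∅

lemma gspec_empty (f : Fin n → Fin n → Bool) : gspec f ∅ = fun _ => ∅ := by
  funext x; simp [gspec]

lemma update_gspec {f : Fin n → Fin n → Bool} {A : Finset (Fin n)} {a : Fin n} (ha : a ∈ A) :
    Function.update (gspec f (A.erase a)) a (NN f a) = gspec f A := by
  funext x
  by_cases hx : x = a
  · subst hx; simp [Function.update_self, gspec, ha]
  · rw [Function.update_of_ne hx]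
    simp [gspec, Finset.mem_erase, hx]

lemma run_enc (f : Fin n → Fin n → Bool) (A : Finset (Fin n)) :
    run (enc f A) st0 =
      if h : A.Nonempty then
        (NN f (amax f A h), gspec f (A.erase (amax f A h)), some (amax f A h))
      else st0 := by
  induction A using Finset.strongInductionOn with
  | _ A ih =>
    by_cases h : A.Nonempty
    · rw [enc, dif_pos h, dif_pos h, run_append,
        ih _ (Finset.erase_ssubset (amax_mem f h))]
      by_cases h' : (A.erase (amax f A h)).Nonempty
      · rw [dif_pos h', run_cons]
        have hstep : step (NN f (amax f (A.erase (amax f A h)) h'),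
            gspec f ((A.erase (amax f A h)).erase (amax f (A.erase (amax f A h)) h')),
            some (amax f (A.erase (amax f A h)) h')) (amax f A h, true) =
            (NN f (amax f (A.erase (amax f A h)) h'),
             gspec f (A.erase (amax f A h)), some (amax f A h)) := by
          simp only [step, if_pos, recd]
          rw [update_gspec (amax_mem f h')]
        rw [hstep]
        have htop : top f (A.erase (amax f A h)) = NN f (amax f (A.erase (amax f A h)) h') := by
          rw [top, dif_pos h']
        rw [htop] at *
        exact run_ops _ _ _ _
      · rw [dif_neg h', run_cons]
        have he : A.erase (amax f A h) = ∅ := Finset.not_nonempty_iff_eq_empty.1 h'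
        have hstep : step st0 (amax f A h, true) =
            ((∅ : Finset (Fin n)), (fun _ => ∅ : Fin n → Finset (Fin n)), some (amax f A h)) := by
          simp [step, st0, recd]
        rw [hstep]
        have htop : top f (A.erase (amax f A h)) = (∅ : Finset (Fin n)) := by
          rw [top, dif_neg h']
        rw [htop, he, gspec_empty]
        exact run_ops _ _ _ _
    · rw [enc, dif_neg h, dif_neg h]; rfl

lemma mem_true_enc (f : Fin n → Fin n → Bool) (A : Finset (Fin n)) (v : Fin n) :
    (v, true) ∈ enc f A ↔ v ∈ A := by
  induction A using Finset.strongInductionOn with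
  | _ A ih =>
    by_cases h : A.Nonempty
    · rw [enc, dif_pos h]
      simp only [List.mem_append, List.mem_cons, ih _ (Finset.erase_ssubset (amax_mem f h)),
        ops, List.mem_map, Prod.mk.injEq]
      constructor
      · rintro (hv | hv | ⟨b, _, _, hb⟩)
        · exact Finset.mem_of_mem_erase hv
        · rw [hv.1]; exact amax_mem f h
        · exact absurd hb.symm (by simp)
      · intro hv
        by_cases hva : v = amax f A h
        · exact Or.inr (Or.inl ⟨hva, trivial⟩)
        · exact Or.inl (Finset.mem_erase.2 ⟨hva, hv⟩)
    · rw [enc, dif_neg h]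
      simp [Finset.not_nonempty_iff_eq_empty.1 h]

lemma finish_pads (a : Fin n) (m : ℕ) :
    ∀ (S : Finset (Fin n)) (g : Fin n → Finset (Fin n)),
    finish (run (List.replicate m (a, true)) (S, g, some a)) = Function.update g a S := by
  induction m with
  | zero => intro S g; rfl
  | succ m ih =>
    intro S g
    rw [List.replicate_succ, run_cons]
    have hstep : step (S, g, some a) (a, true) = (S, Function.update g a S, some a) := by
      simp [step, recd]
    rw [hstep, ih, Function.update_idem]

lemma enc_len (f : Fin n → Fin n → Bool) (t : ℕ) (A : Finset (Fin n))
    (Hf : ∀ a ∈ A, ∀ a' ∈ A, a ≠ a' → (NN f a').card ≤ (NN f a).card →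
      (NN f a' \ NN f a).card ≤ t) :
    (enc f A).length ≤ (2 * t + 1) * A.card + (top f A).card := by
  induction A using Finset.strongInductionOn with
  | _ A ih =>
    by_cases h : A.Nonempty
    · have hmem := amax_mem f h
      set a := amax f A h with ha
      set A' := A.erase a with hA'
      have ihA' : (enc f A').length ≤ (2 * t + 1) * A'.card + (top f A').card := by
        refine ih A' (Finset.erase_ssubset hmem) ?_
        intro x hx y hy
        exact Hf x (Finset.mem_of_mem_erase hx) y (Finset.mem_of_mem_erase hy)
      have hlen : (enc f A).length = (enc f A').length + 1 +
          ((top f A' \ NN f a).card + (NN f a \ top f A').card) := by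
        rw [enc, dif_pos h]
        simp only [List.length_append, List.length_cons, ops, List.length_map,
          Finset.length_sort, ← ha, ← hA']
        omega
      have hkey : (NN f a \ top f A').card + (top f A').card =
          (top f A' \ NN f a).card + (NN f a).card := by
        have c1 := Finset.card_sdiff_add_card_inter (NN f a) (top f A')
        have c2 := Finset.card_sdiff_add_card_inter (top f A') (NN f a)
        rw [Finset.inter_comm] at c2
        omega
      have hD : (top f A' \ NN f a).card ≤ t := by
        by_cases h' : A'.Nonempty
        · rw [top, dif_pos h']
          refine Hf a hmem (amax f A' h')
            (Finset.mem_of_mem_erase (amax_mem f h')) ?_ ?_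
          · exact fun he => (Finset.mem_erase.1 (amax_mem f h')).1 he.symm
          · exact card_le_of_key_le (le_key_amax f h (Finset.mem_of_mem_erase (amax_mem f h')))
        · rw [top, dif_neg h']; simp
      have hcard : A.card = A'.card + 1 := (Finset.card_erase_add_one hmem).symm
      have htop : top f A = NN f a := by rw [top, dif_pos h]
      have hmul : (2 * t + 1) * A.card = (2 * t + 1) * A'.card + (2 * t + 1) := by
        rw [hcard]; ring
      rw [htop, hmul]
      set P := (2 * t + 1) * A'.card with hP
      clear_value P
      omega
    · rw [enc, dif_neg h]
      simp

def Lp (s : ℕ) (f : Fin n → Fin n → Bool) (A : Finset (Fin n)) : List (Fin n × Bool) :=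
  enc f A ++ List.replicate (2 * s * n - (enc f A).length)
    (if h : A.Nonempty then (amax f A h, true) else ((⟨0, NeZero.pos n⟩ : Fin n), false))

lemma length_Lp {s : ℕ} {f : Fin n → Fin n → Bool} {A : Finset (Fin n)}
    (h : (enc f A).length ≤ 2 * s * n) : (Lp s f A).length = 2 * s * n := by
  simp only [Lp, List.length_append, List.length_replicate]
  omega

lemma mem_true_Lp {s : ℕ} {f : Fin n → Fin n → Bool} {A : Finset (Fin n)} {v : Fin n} :
    (v, true) ∈ Lp s f A ↔ v ∈ A := by
  simp only [Lp, List.mem_append, mem_true_enc]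
  constructor
  · rintro (hv | hv)
    · exact hv
    · have := List.eq_of_mem_replicate hv
      by_cases h : A.Nonempty
      · rw [dif_pos h] at this
        obtain ⟨h1, -⟩ := Prod.mk.injEq .. ▸ this
        rw [h1]; exact amax_mem f h
      · rw [dif_neg h] at this
        obtain ⟨-, h2⟩ := Prod.mk.injEq .. ▸ this
        exact absurd h2 (by simp)
  · exact fun hv => Or.inl hv

lemma finish_Lp {s : ℕ} {f : Fin n → Fin n → Bool} {A : Finset (Fin n)} (h : A.Nonempty) :
    finish (run (Lp s f A) st0) = gspec f A := by
  rw [Lp, run_append, run_enc, dif_pos h, dif_pos h, finish_pads]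
  exact update_gspec (amax_mem f h)

lemma free_small {s : ℕ} {A : Finset (Fin n)} {f : Fin n → Fin n → Bool} (hs : 1 ≤ s)
    (h1 : ∀ i j, f i j = true → i ∈ A ∧ j ∉ A)
    (h2 : ¬ ∃ (a a' : Fin n) (B₁ B₂ : Finset (Fin n)), a ∈ A ∧ a' ∈ A ∧ a ≠ a' ∧
        (∀ b ∈ B₁, b ∉ A) ∧ (∀ b ∈ B₂, b ∉ A) ∧ Disjoint B₁ B₂ ∧
        B₁.card = s ∧ B₂.card = s ∧
        (∀ b ∈ B₁, f a b = true) ∧ (∀ b ∈ B₂, f a b = false) ∧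
        (∀ b ∈ B₂, f a' b = true) ∧ (∀ b ∈ B₁, f a' b = false)) :
    ∀ a ∈ A, ∀ a' ∈ A, a ≠ a' → (NN f a').card ≤ (NN f a).card →
      (NN f a' \ NN f a).card ≤ s - 1 := by
  intro a ha a' ha' hne hdeg
  by_contra hc
  push_neg at hc
  have hc2 : s ≤ (NN f a' \ NN f a).card := by omega
  have h3 : s ≤ (NN f a \ NN f a').card := by
    have c1 := Finset.card_sdiff_add_card_inter (NN f a) (NN f a')
    have c2 := Finset.card_sdiff_add_card_inter (NN f a') (NN f a)
    rw [Finset.inter_comm] at c2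
    omega
  obtain ⟨B₁, hB₁s, hB₁c⟩ := Finset.exists_subset_card_eq h3
  obtain ⟨B₂, hB₂s, hB₂c⟩ := Finset.exists_subset_card_eq hc2
  refine h2 ⟨a, a', B₁, B₂, ha, ha', hne, ?_, ?_, ?_, hB₁c, hB₂c, ?_, ?_, ?_, ?_⟩
  · intro b hb
    exact (h1 a b (mem_NN.1 (Finset.mem_sdiff.1 (hB₁s hb)).1)).2
  · intro b hb
    exact (h1 a' b (mem_NN.1 (Finset.mem_sdiff.1 (hB₂s hb)).1)).2
  · rw [Finset.disjoint_left]
    intro b hb hb'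
    exact (Finset.mem_sdiff.1 (hB₂s hb')).2 (Finset.mem_sdiff.1 (hB₁s hb)).1
  · exact fun b hb => mem_NN.1 (Finset.mem_sdiff.1 (hB₁s hb)).1
  · intro b hb
    have := (Finset.mem_sdiff.1 (hB₂s hb)).2
    rw [mem_NN] at this
    exact Bool.not_eq_true _ ▸ this
  · exact fun b hb => mem_NN.1 (Finset.mem_sdiff.1 (hB₂s hb)).1
  · intro b hb
    have := (Finset.mem_sdiff.1 (hB₁s hb)).2
    rw [mem_NN] at this
    exact Bool.not_eq_true _ ▸ this

end TwoStars

open TwoStars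

/-- The number of labelled bipartite graphs on `{1,…,n}` (with a given bipartition
`A ∪ B`, edges only between `A` and its complement `B`) containing no induced `2Λ_s`
(two disjoint stars with centres in `A` and `s` leaves each in `B`) is at most
`(2n)^(2sn)`. -/
theorem count_twostars_free_bipartite (s n : ℕ) (hs : 1 ≤ s) :
    Nat.card {p : Finset (Fin n) × (Fin n → Fin n → Bool) //
      (∀ i j, p.2 i j = true → i ∈ p.1 ∧ j ∉ p.1) ∧
      ¬ ∃ (a a' : Fin n) (B₁ B₂ : Finset (Fin n)), a ∈ p.1 ∧ a' ∈ p.1 ∧ a ≠ a' ∧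
        (∀ b ∈ B₁, b ∉ p.1) ∧ (∀ b ∈ B₂, b ∉ p.1) ∧ Disjoint B₁ B₂ ∧
        B₁.card = s ∧ B₂.card = s ∧
        (∀ b ∈ B₁, p.2 a b = true) ∧ (∀ b ∈ B₂, p.2 a b = false) ∧
        (∀ b ∈ B₂, p.2 a' b = true) ∧ (∀ b ∈ B₁, p.2 a' b = false)} ≤
    (2 * n) ^ (2 * s * n) := by
  rcases Nat.eq_zero_or_pos n with hn | hn
  · subst hn
    set T := {p : Finset (Fin 0) × (Fin 0 → Fin 0 → Bool) //
      (∀ i j, p.2 i j = true → i ∈ p.1 ∧ j ∉ p.1) ∧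
      ¬ ∃ (a a' : Fin 0) (B₁ B₂ : Finset (Fin 0)), a ∈ p.1 ∧ a' ∈ p.1 ∧ a ≠ a' ∧
        (∀ b ∈ B₁, b ∉ p.1) ∧ (∀ b ∈ B₂, b ∉ p.1) ∧ Disjoint B₁ B₂ ∧
        B₁.card = s ∧ B₂.card = s ∧
        (∀ b ∈ B₁, p.2 a b = true) ∧ (∀ b ∈ B₂, p.2 a b = false) ∧
        (∀ b ∈ B₂, p.2 a' b = true) ∧ (∀ b ∈ B₁, p.2 a' b = false)} with hT
    haveI : Subsingleton T := by
      constructor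
      rintro ⟨⟨A₁, f₁⟩, -⟩ ⟨⟨A₂, f₂⟩, -⟩
      have hA : A₁ = A₂ := by ext x; exact x.elim0
      have hf : f₁ = f₂ := by funext i; exact i.elim0
      subst hA; subst hf; rfl
    have : Nat.card T ≤ Nat.card (Fin 1) :=
      Nat.card_le_card_of_injective (fun _ : T => (0 : Fin 1))
        (fun a b _ => Subsingleton.elim a b)
    simpa using this
  · haveI : NeZero n := ⟨hn.ne'⟩
    obtain ⟨t, rfl⟩ : ∃ t, s = t + 1 := ⟨s - 1, by omega⟩
    set s := t + 1 with hseq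
    set T := {p : Finset (Fin n) × (Fin n → Fin n → Bool) //
      (∀ i j, p.2 i j = true → i ∈ p.1 ∧ j ∉ p.1) ∧
      ¬ ∃ (a a' : Fin n) (B₁ B₂ : Finset (Fin n)), a ∈ p.1 ∧ a' ∈ p.1 ∧ a ≠ a' ∧
        (∀ b ∈ B₁, b ∉ p.1) ∧ (∀ b ∈ B₂, b ∉ p.1) ∧ Disjoint B₁ B₂ ∧
        B₁.card = s ∧ B₂.card = s ∧
        (∀ b ∈ B₁, p.2 a b = true) ∧ (∀ b ∈ B₂, p.2 a b = false) ∧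
        (∀ b ∈ B₂, p.2 a' b = true) ∧ (∀ b ∈ B₁, p.2 a' b = false)} with hT
    have hencle : ∀ p : T, (enc p.val.2 p.val.1).length ≤ 2 * s * n := by
      intro p
      have hfree := free_small hs p.prop.1 p.prop.2
      have hfree' : ∀ a ∈ p.val.1, ∀ a' ∈ p.val.1, a ≠ a' →
          (NN p.val.2 a').card ≤ (NN p.val.2 a).card →
          (NN p.val.2 a' \ NN p.val.2 a).card ≤ t := by
        intro a ha a' ha' hne hd
        have := hfree a ha a' ha' hne hd
        omega
      have h1 : p.val.1.card ≤ n := by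
        simpa using Finset.card_le_univ p.val.1
      have h2 : (top p.val.2 p.val.1).card ≤ n := by
        simpa using Finset.card_le_univ (top p.val.2 p.val.1)
      calc (enc p.val.2 p.val.1).length
          ≤ (2 * t + 1) * p.val.1.card + (top p.val.2 p.val.1).card :=
            enc_len p.val.2 t p.val.1 hfree'
        _ ≤ (2 * t + 1) * n + n := add_le_add (Nat.mul_le_mul_left _ h1) h2
        _ = 2 * s * n := by rw [hseq]; ring
    have hlenL : ∀ p : T, (Lp s p.val.2 p.val.1).length = 2 * s * n :=
      fun p => length_Lp (hencle p)
    set F : T → (Fin (2 * s * n) → Fin n × Bool) :=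
      fun p i => (Lp s p.val.2 p.val.1).get ⟨i.val, by rw [hlenL p]; exact i.isLt⟩ with hF
    have hFinj : Function.Injective F := by
      intro p q hpq
      have hL : Lp s p.val.2 p.val.1 = Lp s q.val.2 q.val.1 := by
        apply List.ext_get (by rw [hlenL p, hlenL q])
        intro i hip hiq
        have hi : i < 2 * s * n := by rw [← hlenL p]; exact hip
        exact congrFun hpq ⟨i, hi⟩
      have hA : p.val.1 = q.val.1 := by
        ext v
        rw [← mem_true_Lp (s := s) (f := p.val.2), ← mem_true_Lp (s := s) (f := q.val.2), hL]
      have hf : p.val.2 = q.val.2 := by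
        by_cases hne : p.val.1.Nonempty
        · have hne' : q.val.1.Nonempty := hA ▸ hne
          have hg : gspec p.val.2 p.val.1 = gspec q.val.2 q.val.1 := by
            rw [← finish_Lp (s := s) hne, ← finish_Lp (s := s) hne', hL]
          funext i j
          by_cases hi : i ∈ p.val.1
          · have hNi : NN p.val.2 i = NN q.val.2 i := by
              have h1 := congrFun hg i
              have hi' : i ∈ q.val.1 := hA ▸ hi
              simpa [gspec, hi, hi'] using h1
            have hiff : (p.val.2 i j = true) ↔ (q.val.2 i j = true) := by
              rw [← mem_NN, ← mem_NN, hNi]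
            cases hj : p.val.2 i j with
            | true => exact (hiff.1 hj).symm
            | false =>
              cases hj' : q.val.2 i j with
              | true => exact absurd (hiff.2 hj') (by rw [hj]; simp)
              | false => rfl
          · have e1 : p.val.2 i j = false := by
              cases hj : p.val.2 i j with
              | false => rfl
              | true => exact absurd (p.prop.1 i j hj).1 hi
            have e2 : q.val.2 i j = false := by
              cases hj : q.val.2 i j with
              | false => rfl
              | true => exact absurd (q.prop.1 i j hj).1 (hA ▸ hi)
            rw [e1, e2]
        · have he : p.val.1 = ∅ := Finset.not_nonempty_iff_eq_empty.1 hne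
          have he' : q.val.1 = ∅ := hA ▸ he
          funext i j
          have e1 : p.val.2 i j = false := by
            cases hj : p.val.2 i j with
            | false => rfl
            | true => exact absurd (p.prop.1 i j hj).1 (by rw [he]; simp)
          have e2 : q.val.2 i j = false := by
            cases hj : q.val.2 i j with
            | false => rfl
            | true => exact absurd (q.prop.1 i j hj).1 (by rw [he']; simp)
          rw [e1, e2]
      exact Subtype.ext (Prod.ext hA hf)
    calc Nat.card T ≤ Nat.card (Fin (2 * s * n) → Fin n × Bool) :=
          Nat.card_le_card_of_injective F hFinj
      _ = (2 * n) ^ (2 * s * n) := by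
          rw [Nat.card_eq_fintype_card]
          simp [Fintype.card_fun, mul_comm]
end

section
/- Let G = (A, B, E) be a bipartite graph with a chain template A = A₁ ∪ … ∪ A_z, B = B₁ ∪ … ∪ B_z (Aᵢ complete to Bⱼ for j > i+1, Aᵢ anticomplete to Bⱼ for j < i), such that for all i the graph induced between Aᵢ and Bᵢ and the graph induced between Aᵢ and B_{i+1} are both 2K₂-free. Setting A' = ⋃_{i odd} Aᵢ, A'' = ⋃_{i even} Aᵢ, B' = ⋃_{i odd} Bᵢ, B'' = ⋃_{i even} Bᵢ, the induced bipartite graph between A' and B' is 2K₂-free. -/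
/-- The bipartite graph induced between `SA ⊆ A` and `SB ⊆ B` contains an induced `2K₂`. -/
def Has2K2Between {A B : Type*} (E : A → B → Prop) (SA : Set A) (SB : Set B) : Prop :=
  ∃ (a₁ a₂ : A) (b₁ b₂ : B), a₁ ∈ SA ∧ a₂ ∈ SA ∧ b₁ ∈ SB ∧ b₂ ∈ SB ∧ a₁ ≠ a₂ ∧ b₁ ≠ b₂ ∧
    E a₁ b₁ ∧ E a₂ b₂ ∧ ¬ E a₁ b₂ ∧ ¬ E a₂ b₁

/-- In a chain template of a bipartite graph whose graphs between consecutive bags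
`(Aᵢ, Bᵢ)` and `(Aᵢ, B_{i+1})` are `2K₂`-free, the bipartite graph induced between the
union of the odd-indexed `A`-parts and the union of the odd-indexed `B`-parts is
`2K₂`-free. -/
theorem chain_template_odd_union_2K2_free {A B : Type*} (E : A → B → Prop) (z : ℕ)
    (PA : ℕ → Set A) (PB : ℕ → Set B)
    (hAcover : ∀ a : A, ∃ i, 1 ≤ i ∧ i ≤ z ∧ a ∈ PA i)
    (hBcover : ∀ b : B, ∃ i, 1 ≤ i ∧ i ≤ z ∧ b ∈ PB i)
    (hAdisj : ∀ i j, i ≠ j → Disjoint (PA i) (PA j))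
    (hBdisj : ∀ i j, i ≠ j → Disjoint (PB i) (PB j))
    (hjoin : ∀ i j, i + 1 < j → ∀ a ∈ PA i, ∀ b ∈ PB j, E a b)
    (hcojoin : ∀ i j, j < i → ∀ a ∈ PA i, ∀ b ∈ PB j, ¬ E a b)
    (hsame : ∀ i, ¬ Has2K2Between E (PA i) (PB i))
    (hnext : ∀ i, ¬ Has2K2Between E (PA i) (PB (i + 1))) :
    ¬ Has2K2Between E {a | ∃ m, a ∈ PA (2 * m + 1)} {b | ∃ m, b ∈ PB (2 * m + 1)} := by
  rintro ⟨a₁, a₂, b₁, b₂, ⟨m₁, ha₁⟩, ⟨m₂, ha₂⟩, ⟨m₃, hb₁⟩, ⟨m₄, hb₂⟩,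
    hne₁, hne₂, e₁, e₂, ne₁, ne₂⟩
  -- i ≤ k from e₁, l ≤ i from ¬e (a₁ b₂), j ≤ l from e₂, k ≤ j from ¬e (a₂ b₁)
  have h1 : 2 * m₁ + 1 ≤ 2 * m₃ + 1 := by
    by_contra h
    exact hcojoin _ _ (by omega) a₁ ha₁ b₁ hb₁ e₁
  have h2 : 2 * m₄ + 1 ≤ 2 * m₁ + 1 := by
    by_contra h
    exact ne₁ (hjoin _ _ (by omega) a₁ ha₁ b₂ hb₂)
  have h3 : 2 * m₂ + 1 ≤ 2 * m₄ + 1 := by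
    by_contra h
    exact hcojoin _ _ (by omega) a₂ ha₂ b₂ hb₂ e₂
  have h4 : 2 * m₃ + 1 ≤ 2 * m₂ + 1 := by
    by_contra h
    exact ne₂ (hjoin _ _ (by omega) a₂ ha₂ b₁ hb₁)
  rw [show m₂ = m₁ by omega] at ha₂
  rw [show m₃ = m₁ by omega] at hb₁
  rw [show m₄ = m₁ by omega] at hb₂
  exact hsame (2 * m₁ + 1) ⟨a₁, a₂, b₁, b₂, ha₁, ha₂, hb₁, hb₂,
    hne₁, hne₂, e₁, e₂, ne₁, ne₂⟩
end

section
/- Let T ≥ 1 and let G be the perfect matching (T²+1)K₂ on 2(T²+1) vertices. Then G is not a (T,1)-graph: there is no partition of V(G) into at most T parts, each a clique or an independent set, with the bipartite graph induced between any two parts being 2K₂-free. -/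
/-- The perfect matching `N·K₂`: vertex set `Fin N × Fin 2`, with `(i,x)` adjacent to
`(j,y)` iff `i = j` and `x ≠ y`. -/
def matchingGraph (N : ℕ) : SimpleGraph (Fin N × Fin 2) :=
  SimpleGraph.fromRel (fun p q => p.1 = q.1)

lemma matchingGraph_adj_same (N : ℕ) (i : Fin N) :
    (matchingGraph N).Adj (i, 0) (i, 1) := by
  simp [matchingGraph, SimpleGraph.fromRel_adj]

lemma matchingGraph_not_adj (N : ℕ) {i j : Fin N} (h : i ≠ j) (x y : Fin 2) :
    ¬ (matchingGraph N).Adj (i, x) (j, y) := by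
  simp [matchingGraph, SimpleGraph.fromRel_adj, h, h.symm]

/-- For `T ≥ 1`, the matching `(T²+1)K₂` is not a `(T,1)`-graph: there is no partition of
its vertices into at most `T` parts, each a clique or an independent set, with the
bipartite graph between any two parts `2K₂`-free. -/
theorem matching_not_T1_graph (T : ℕ) (hT : 1 ≤ T) :
    ¬ ∃ (t : ℕ) (f : Fin (T ^ 2 + 1) × Fin 2 → Fin t), t ≤ T ∧
      (∀ i : Fin t,
        (∀ u v, f u = i → f v = i → u ≠ v → (matchingGraph (T ^ 2 + 1)).Adj u v) ∨
        (∀ u v, f u = i → f v = i → u ≠ v → ¬ (matchingGraph (T ^ 2 + 1)).Adj u v)) ∧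
      (∀ i j : Fin t, i ≠ j →
        ¬ ∃ a₁ a₂ b₁ b₂, f a₁ = i ∧ f a₂ = i ∧ f b₁ = j ∧ f b₂ = j ∧
          (matchingGraph (T ^ 2 + 1)).Adj a₁ b₁ ∧ (matchingGraph (T ^ 2 + 1)).Adj a₂ b₂ ∧
          ¬ (matchingGraph (T ^ 2 + 1)).Adj a₁ b₂ ∧
          ¬ (matchingGraph (T ^ 2 + 1)).Adj a₂ b₁ ∧ a₁ ≠ a₂ ∧ b₁ ≠ b₂) := by
  rintro ⟨t, f, ht, hparts, hbip⟩
  have hcard : Fintype.card (Fin t × Fin t) < Fintype.card (Fin (T ^ 2 + 1)) := by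
    simp only [Fintype.card_prod, Fintype.card_fin, pow_two]
    have : t * t ≤ T * T := Nat.mul_le_mul ht ht
    omega
  obtain ⟨i, j, hij, heq⟩ := Fintype.exists_ne_map_eq_of_card_lt
    (fun i : Fin (T ^ 2 + 1) => (f (i, 0), f (i, 1))) hcard
  have h0 : f (i, 0) = f (j, 0) := congrArg Prod.fst heq
  have h1 : f (i, 1) = f (j, 1) := congrArg Prod.snd heq
  set c := f (i, 0) with hc
  set d := f (i, 1) with hd
  by_cases hcd : c = d
  · rcases hparts c with hcl | hin
    · exact matchingGraph_not_adj _ hij 0 0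
        (hcl (i, 0) (j, 0) rfl h0.symm (by simp [hij]))
    · exact hin (i, 0) (i, 1) rfl (hcd ▸ hd).symm (by simp)
        (matchingGraph_adj_same _ i)
  · exact hbip c d hcd ⟨(i, 0), (j, 0), (i, 1), (j, 1), rfl, h0.symm, rfl, h1.symm,
      matchingGraph_adj_same _ i, matchingGraph_adj_same _ j,
      matchingGraph_not_adj _ hij 0 1, matchingGraph_not_adj _ hij.symm 0 1,
      by simp [hij], by simp [hij]⟩
end

section
/- Let M be a finite set of vertices, each v ∈ M equipped with an integer interval trace tr(v) = {j(v), …, i(v)} ⊆ ℕ, and suppose that for every l ∈ ℕ the set {v ∈ M : l ∈ tr(v)} has at most c elements. Then M can be partitioned into at most c subsets M₁, …, M_c such that within each subset, the traces of any two distinct vertices are disjoint. -/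
open Finset

private lemma trace_partition_aux {V : Type*} [DecidableEq V] (c : ℕ) :
    ∀ n (M : Finset V) (tr : V → Finset ℕ), M.card = n →
    (∀ v ∈ M, ∃ j i : ℕ, j ≤ i ∧ tr v = Finset.Icc j i) →
    (∀ l : ℕ, (M.filter (fun v => l ∈ tr v)).card ≤ c) →
    ∃ P : Fin c → Finset V,
      (∀ i, P i ⊆ M) ∧
      (∀ v ∈ M, ∃ i, v ∈ P i) ∧
      (∀ i j, i ≠ j → Disjoint (P i) (P j)) ∧
      (∀ i, ∀ v ∈ P i, ∀ w ∈ P i, v ≠ w → Disjoint (tr v) (tr w)) := by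
  intro n
  induction n using Nat.strong_induction_on with
  | _ n IH =>
    intro M tr hcard hinterval hcap
    classical
    rcases M.eq_empty_or_nonempty with rfl | hne
    · exact ⟨fun _ => ∅, by simp, by simp, by simp, by simp⟩
    -- the left endpoint function
    set J : V → ℕ := fun v => if h : (tr v).Nonempty then (tr v).min' h else 0 with hJ
    have htrne : ∀ v ∈ M, (tr v).Nonempty := by
      intro v hv
      obtain ⟨j, i, hji, htr⟩ := hinterval v hv
      rw [htr]; exact Finset.nonempty_Icc.2 hji
    have hJmem : ∀ v ∈ M, J v ∈ tr v := by
      intro v hv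
      simp only [hJ, dif_pos (htrne v hv)]
      exact Finset.min'_mem _ _
    have hJle : ∀ v ∈ M, ∀ l ∈ tr v, J v ≤ l := by
      intro v hv l hl
      simp only [hJ, dif_pos (htrne v hv)]
      exact Finset.min'_le _ _ hl
    -- pick v with maximal left endpoint
    obtain ⟨v, hvM, hvmax⟩ := M.exists_max_image J hne
    set M' := M.erase v with hM'
    have hM'sub : M' ⊆ M := Finset.erase_subset _ _
    have hcard' : M'.card < n := by
      rw [← hcard, hM']
      exact Finset.card_erase_lt_of_mem hvM
    obtain ⟨P, hPsub, hPcov, hPdisj, hPtr⟩ := IH M'.card hcard' M' tr rfl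
      (fun w hw => hinterval w (hM'sub hw))
      (fun l => le_trans (Finset.card_le_card (Finset.filter_subset_filter _ hM'sub)) (hcap l))
    -- neighbors of v
    set N := M'.filter (fun w => ¬ Disjoint (tr v) (tr w)) with hN
    -- each neighbor contains J v
    have hNmem : ∀ w ∈ N, J v ∈ tr w := by
      intro w hw
      rw [hN, Finset.mem_filter] at hw
      obtain ⟨hwM', hndisj⟩ := hw
      have hwM : w ∈ M := hM'sub hwM'
      rw [Finset.not_disjoint_iff] at hndisj
      obtain ⟨l, hlv, hlw⟩ := hndisj
      obtain ⟨jw, iw, hjiw, htrw⟩ := hinterval w hwM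
      have hJw : J w = jw := by
        apply le_antisymm
        · exact hJle w hwM jw (by rw [htrw]; exact Finset.mem_Icc.2 ⟨le_refl _, hjiw⟩)
        · have := hJmem w hwM
          rw [htrw, Finset.mem_Icc] at this
          exact this.1
      rw [htrw, Finset.mem_Icc]
      constructor
      · rw [← hJw]; exact hvmax w hwM
      · have h1 : J v ≤ l := hJle v hvM l hlv
        have h2 : l ≤ iw := by
          rw [htrw, Finset.mem_Icc] at hlw; exact hlw.2
        exact le_trans h1 h2
    -- insert v N ⊆ filter
    have hsub : insert v N ⊆ M.filter (fun w => J v ∈ tr w) := by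
      intro w hw
      rw [Finset.mem_insert] at hw
      rcases hw with rfl | hw
      · exact Finset.mem_filter.2 ⟨hvM, hJmem w hvM⟩
      · exact Finset.mem_filter.2 ⟨hM'sub (Finset.mem_of_mem_filter _ hw), hNmem w hw⟩
    have hvN : v ∉ N := fun h => (Finset.notMem_erase v M) (Finset.mem_of_mem_filter _ h)
    have hNcard : N.card + 1 ≤ c := by
      have := Finset.card_le_card hsub
      rw [Finset.card_insert_of_notMem hvN] at this
      exact le_trans this (hcap (J v))
    -- used colors
    set S : Finset (Fin c) := Finset.univ.filter (fun i => ∃ w ∈ N, w ∈ P i) with hS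
    have hScard : S.card ≤ N.card := by
      have : ∀ i ∈ S, ∃ w ∈ N, w ∈ P i := by
        intro i hi
        rw [hS, Finset.mem_filter] at hi
        exact hi.2
      set f : Fin c → V := fun i => if h : ∃ w ∈ N, w ∈ P i then h.choose else v with hf
      have hf1 : ∀ i ∈ S, f i ∈ N := by
        intro i hi
        have h := this i hi
        simp only [hf, dif_pos h]
        exact h.choose_spec.1
      have hf2 : ∀ i ∈ S, f i ∈ P i := by
        intro i hi
        have h := this i hi
        simp only [hf, dif_pos h]
        exact h.choose_spec.2
      apply Finset.card_le_card_of_injOn f hf1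
      intro i1 h1 i2 h2 heq
      by_contra hne'
      exact (Finset.disjoint_left.1 (hPdisj i1 i2 hne') (hf2 i1 h1))
        (heq ▸ hf2 i2 h2)
    have hSne : S ≠ Finset.univ := by
      intro h
      have : (Finset.univ : Finset (Fin c)).card ≤ N.card := h ▸ hScard
      rw [Finset.card_univ, Fintype.card_fin] at this
      omega
    obtain ⟨i₀, hi₀⟩ : ∃ i : Fin c, i ∉ S := by
      by_contra h
      push_neg at h
      exact hSne (Finset.eq_univ_iff_forall.2 h)
    have hi₀free : ∀ w ∈ N, w ∉ P i₀ := by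
      intro w hw hwP
      exact hi₀ (Finset.mem_filter.2 ⟨Finset.mem_univ _, w, hw, hwP⟩)
    -- new partition
    refine ⟨fun i => if i = i₀ then insert v (P i) else P i, ?_, ?_, ?_, ?_⟩
    · intro i
      by_cases h : i = i₀ <;> simp only [h, if_true, if_false, if_neg]
      · exact Finset.insert_subset hvM (le_trans (hPsub i₀) hM'sub)
      · exact le_trans (hPsub i) hM'sub
    · intro w hw
      by_cases hwv : w = v
      · exact ⟨i₀, by simp [hwv]⟩
      · obtain ⟨i, hi⟩ := hPcov w (Finset.mem_erase.2 ⟨hwv, hw⟩)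
        refine ⟨i, ?_⟩
        by_cases h : i = i₀
        · subst h; simp [Finset.mem_insert, hi]
        · simp [h, hi]
    · intro a b hab
      have hvP : ∀ i, v ∉ P i := fun i h =>
        Finset.notMem_erase v M (hPsub i h)
      by_cases ha : a = i₀ <;> by_cases hb : b = i₀
      · exact absurd (ha.trans hb.symm) hab
      · simp only [ha, if_true, if_neg hb]
        rw [Finset.disjoint_insert_left]
        exact ⟨hvP b, hPdisj i₀ b (by rw [← ha]; exact hab)⟩
      · simp only [hb, if_true, if_neg ha]
        rw [Finset.disjoint_insert_right]
        exact ⟨hvP a, hPdisj a i₀ (by rw [← hb]; exact hab)⟩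
      · simp only [if_neg ha, if_neg hb]
        exact hPdisj a b hab
    · intro i w hw u hu hwu
      by_cases h : i = i₀
      · simp only [h, if_true] at hw hu
        rw [Finset.mem_insert] at hw hu
        have key : ∀ u', u' ∈ P i₀ → Disjoint (tr v) (tr u') := by
          intro u' hu'
          by_contra hnd
          exact hi₀free u' (Finset.mem_filter.2 ⟨hPsub i₀ hu', hnd⟩) hu'
        rcases hw with rfl | hw <;> rcases hu with rfl | hu
        · exact absurd rfl hwu
        · exact key u hu
        · exact (key w hw).symm
        · exact hPtr i₀ w hw u hu hwu
      · simp only [if_neg h] at hw hu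
        exact hPtr i w hw u hu hwu

/-- If each vertex of a finite set `M` carries a nonempty interval trace `tr v ⊆ ℕ` and
every natural number lies in the traces of at most `c` vertices, then `M` can be
partitioned into at most `c` parts within which all traces are pairwise disjoint. -/
theorem trace_partition {V : Type*} [DecidableEq V] (M : Finset V) (tr : V → Finset ℕ)
    (c : ℕ)
    (hinterval : ∀ v ∈ M, ∃ j i : ℕ, j ≤ i ∧ tr v = Finset.Icc j i)
    (hcap : ∀ l : ℕ, (M.filter (fun v => l ∈ tr v)).card ≤ c) :
    ∃ P : Fin c → Finset V,
      (∀ i, P i ⊆ M) ∧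
      (∀ v ∈ M, ∃ i, v ∈ P i) ∧
      (∀ i j, i ≠ j → Disjoint (P i) (P j)) ∧
      (∀ i, ∀ v ∈ P i, ∀ w ∈ P i, v ≠ w → Disjoint (tr v) (tr w)) := by
  exact trace_partition_aux c M.card M tr rfl hinterval hcap
end

section
/- Suppose X and Y are hereditary graph classes such that every graph G ∈ X has a vertex partition into at most T parts with each part inducing a graph in Y and each induced bipartite graph between two parts belonging to Y, and suppose the number of labelled n-vertex graphs in Y is at most (2n)^{cn} for some constant c. Then the number of labelled n-vertex graphs in X is at most n^{C·n} for some constant C depending only on T and c (in particular X has at most factorial speed of growth). -/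
open Finset Function

/-- The set of vertices in part `i`. -/
def partSet (n T : ℕ) (f0 : Fin n → Fin T) (i : Fin T) : Finset (Fin n) :=
  Finset.univ.filter fun v => f0 v = i

/-- Canonical (order) embedding of part `i` into `Fin n`. -/
def partEmb (n T : ℕ) (f0 : Fin n → Fin T) (i : Fin T) :
    Fin (partSet n T f0 i).card ↪ Fin n :=
  ((partSet n T f0 i).orderEmbOfFin rfl).toEmbedding

lemma partEmb_range (n T : ℕ) (f0 : Fin n → Fin T) (i : Fin T) :
    Set.range ⇑(partEmb n T f0 i) = {v | f0 v = i} := by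
  have h := Finset.range_orderEmbOfFin (partSet n T f0 i) rfl
  rw [show ⇑(partEmb n T f0 i) = ⇑((partSet n T f0 i).orderEmbOfFin rfl) from rfl, h]
  ext v; simp [partSet]

/-- The set of vertices in parts `i` and `j`. -/
def pairSet (n T : ℕ) (f0 : Fin n → Fin T) (i j : Fin T) : Finset (Fin n) :=
  Finset.univ.filter fun v => f0 v = i ∨ f0 v = j

/-- Canonical (order) embedding of parts `i ∪ j` into `Fin n`. -/
def pairEmb (n T : ℕ) (f0 : Fin n → Fin T) (i j : Fin T) :
    Fin (pairSet n T f0 i j).card ↪ Fin n :=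
  ((pairSet n T f0 i j).orderEmbOfFin rfl).toEmbedding

lemma pairEmb_range (n T : ℕ) (f0 : Fin n → Fin T) (i j : Fin T) :
    Set.range ⇑(pairEmb n T f0 i j) = {v | f0 v = i ∨ f0 v = j} := by
  have h := Finset.range_orderEmbOfFin (pairSet n T f0 i j) rfl
  rw [show ⇑(pairEmb n T f0 i j) = ⇑((pairSet n T f0 i j).orderEmbOfFin rfl) from rfl, h]
  ext v; simp [pairSet]

lemma card_lt_succ {n : ℕ} (s : Finset (Fin n)) : s.card < n + 1 := by
  have := Finset.card_le_univ s
  simp only [Finset.card_univ, Fintype.card_fin] at this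
  omega

/-- Hereditary transfer along embeddings with smaller range. -/
lemma Y_transfer (Y : ∀ n : ℕ, SimpleGraph (Fin n) → Prop)
    (hY : ∀ (m n : ℕ) (φ : Fin m ↪ Fin n) (G : SimpleGraph (Fin n)), Y n G → Y m (G.comap φ))
    {m m' n : ℕ} (ψ : Fin m ↪ Fin n) (φ : Fin m' ↪ Fin n)
    (hsub : Set.range ⇑ψ ⊆ Set.range ⇑φ) (G : SimpleGraph (Fin n))
    (h : Y m' (G.comap φ)) : Y m (G.comap ψ) := by
  have hmem : ∀ a : Fin m, ∃ b : Fin m', φ b = ψ a := fun a => hsub (Set.mem_range_self a)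
  choose g hg using hmem
  have ginj : Function.Injective g := by
    intro a b hab
    apply ψ.injective
    rw [← hg, ← hg, hab]
  have h2 := hY m m' ⟨g, ginj⟩ (G.comap φ) h
  have heq : (G.comap φ).comap (⟨g, ginj⟩ : Fin m ↪ Fin m') = G.comap ψ := by
    ext a b
    simp only [SimpleGraph.comap_adj, Embedding.coeFn_mk, hg]
  rwa [heq] at h2

lemma nat_card_sigma {ι : Type*} [Fintype ι] (f : ι → Type*) [∀ i, Finite (f i)] :
    Nat.card (Σ i, f i) = ∑ i, Nat.card (f i) := by
  have := fun i => Fintype.ofFinite (f i)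
  simp [Nat.card_eq_fintype_card]

/-- Extracting part-graph equality from the sigma-encoded data. -/
lemma extract_part (n T : ℕ) (fA fB : Fin n → Fin T) (h : fA = fB)
    (A B : SimpleGraph (Fin n)) (i : Fin T)
    (pA : (partSet n T fA i).card < n + 1) (pB : (partSet n T fB i).card < n + 1)
    (hd : (⟨⟨(partSet n T fA i).card, pA⟩, A.comap (partEmb n T fA i)⟩ :
        Σ m : Fin (n + 1), SimpleGraph (Fin (m : ℕ)))
      = ⟨⟨(partSet n T fB i).card, pB⟩, B.comap (partEmb n T fB i)⟩) :
    A.comap (partEmb n T fA i) = B.comap (partEmb n T fA i) := by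
  subst h
  rw [Sigma.mk.inj_iff] at hd
  exact eq_of_heq hd.2

/-- Extracting pair-graph equality from the sigma-encoded data. -/
lemma extract_pair (n T : ℕ) (fA fB : Fin n → Fin T) (h : fA = fB)
    (A B : SimpleGraph (Fin n)) (i j : Fin T)
    (pA : (pairSet n T fA i j).card < n + 1) (pB : (pairSet n T fB i j).card < n + 1)
    (hd : (⟨⟨(pairSet n T fA i j).card, pA⟩,
        (SimpleGraph.fromRel (fun u v => A.Adj u v ∧ fA u = i ∧ fA v = j)).comap
          (pairEmb n T fA i j)⟩ :
        Σ m : Fin (n + 1), SimpleGraph (Fin (m : ℕ)))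
      = ⟨⟨(pairSet n T fB i j).card, pB⟩,
        (SimpleGraph.fromRel (fun u v => B.Adj u v ∧ fB u = i ∧ fB v = j)).comap
          (pairEmb n T fB i j)⟩) :
    (SimpleGraph.fromRel (fun u v => A.Adj u v ∧ fA u = i ∧ fA v = j)).comap
        (pairEmb n T fA i j)
      = (SimpleGraph.fromRel (fun u v => B.Adj u v ∧ fA u = i ∧ fA v = j)).comap
        (pairEmb n T fA i j) := by
  subst h
  rw [Sigma.mk.inj_iff] at hd
  exact eq_of_heq hd.2

/-- Reconstruction: a graph is determined by its part graphs and pair graphs. -/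
lemma reconstruct (n T : ℕ) (f0 : Fin n → Fin T) (A B : SimpleGraph (Fin n))
    (hA : ∀ i : Fin T, A.comap (partEmb n T f0 i) = B.comap (partEmb n T f0 i))
    (hB : ∀ i j : Fin T, i ≠ j →
      (SimpleGraph.fromRel (fun u v => A.Adj u v ∧ f0 u = i ∧ f0 v = j)).comap
          (pairEmb n T f0 i j)
        = (SimpleGraph.fromRel (fun u v => B.Adj u v ∧ f0 u = i ∧ f0 v = j)).comap
          (pairEmb n T f0 i j)) :
    ∀ u v, A.Adj u v → B.Adj u v := by
  intro u v huv
  by_cases hfe : f0 u = f0 v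
  · set i := f0 u with hi
    have hu : u ∈ Set.range ⇑(partEmb n T f0 i) := by rw [partEmb_range]; exact rfl
    have hv : v ∈ Set.range ⇑(partEmb n T f0 i) := by rw [partEmb_range]; exact hfe.symm
    obtain ⟨a, ha⟩ := hu
    obtain ⟨b, hb⟩ := hv
    have hab : (A.comap (partEmb n T f0 i)).Adj a b := by
      simp only [SimpleGraph.comap_adj, ha, hb]; exact huv
    rw [hA i] at hab
    simpa only [SimpleGraph.comap_adj, ha, hb] using hab
  · set i := f0 u with hi
    set j := f0 v with hj
    have hij : i ≠ j := hfe
    have hu : u ∈ Set.range ⇑(pairEmb n T f0 i j) := by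
      rw [pairEmb_range]; exact Or.inl rfl
    have hv : v ∈ Set.range ⇑(pairEmb n T f0 i j) := by
      rw [pairEmb_range]; exact Or.inr rfl
    obtain ⟨a, ha⟩ := hu
    obtain ⟨b, hb⟩ := hv
    have hab : ((SimpleGraph.fromRel
        (fun u v => A.Adj u v ∧ f0 u = i ∧ f0 v = j)).comap
        (pairEmb n T f0 i j)).Adj a b := by
      simp only [SimpleGraph.comap_adj, ha, hb, SimpleGraph.fromRel_adj]
      exact ⟨huv.ne, Or.inl ⟨huv, by trivial, by trivial⟩⟩
    rw [hB i j hij] at hab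
    simp only [SimpleGraph.comap_adj, ha, hb, SimpleGraph.fromRel_adj] at hab
    rcases hab.2 with ⟨h, _⟩ | ⟨h, _⟩
    · exact h
    · exact h.symm

/-- Factorial speed via locally bounded coverings: if every graph in a hereditary class
`X` admits a vertex partition into at most `T` parts with each part inducing a graph of a
hereditary class `Y` and each bipartite graph between two parts belonging to `Y`, and `Y`
contains at most `(2n)^(cn)` labelled graphs on `n` vertices, then `X` contains at most
`n^(Cn)` labelled graphs on `n` vertices for some constant `C = C(T, c)`. -/
theorem factorial_speed_of_covering (T c : ℕ) : ∃ C : ℕ,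
    ∀ (X Y : ∀ n : ℕ, SimpleGraph (Fin n) → Prop),
      (∀ (m n : ℕ) (φ : Fin m ↪ Fin n) (G : SimpleGraph (Fin n)),
        X n G → X m (G.comap φ)) →
      (∀ (m n : ℕ) (φ : Fin m ↪ Fin n) (G : SimpleGraph (Fin n)),
        Y n G → Y m (G.comap φ)) →
      (∀ (n : ℕ) (G : SimpleGraph (Fin n)), X n G →
        ∃ f : Fin n → Fin T,
          (∀ i : Fin T, ∃ (m : ℕ) (φ : Fin m ↪ Fin n),
            Set.range φ = {v | f v = i} ∧ Y m (G.comap φ)) ∧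
          (∀ i j : Fin T, i ≠ j → ∃ (m : ℕ) (φ : Fin m ↪ Fin n),
            Set.range φ = {v | f v = i ∨ f v = j} ∧
            Y m ((SimpleGraph.fromRel (fun u v => G.Adj u v ∧ f u = i ∧ f v = j)).comap φ))) →
      (∀ n : ℕ, Nat.card {G : SimpleGraph (Fin n) // Y n G} ≤ (2 * n) ^ (c * n)) →
      ∀ n : ℕ, Nat.card {G : SimpleGraph (Fin n) // X n G} ≤ n ^ (C * n) := by
  classical
  refine ⟨T + (T + T * T) * (2 * c + 1), ?_⟩
  intro X Y hXhered hYhered hcov hcount n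
  match n, hcov n with
  | 0, _ =>
    have hs : Subsingleton (SimpleGraph (Fin 0)) := ⟨fun G H => by ext a b; exact a.elim0⟩
    calc Nat.card {G : SimpleGraph (Fin 0) // X 0 G} ≤ Nat.card (SimpleGraph (Fin 0)) :=
          Nat.card_le_card_of_injective _ Subtype.val_injective
      _ ≤ 1 := by rw [Nat.card_eq_fintype_card]; exact Fintype.card_le_one_iff_subsingleton.mpr hs
      _ = _ := by simp
  | 1, _ =>
    have hs : Subsingleton (SimpleGraph (Fin 1)) := ⟨fun G H => by
      ext a b
      have hab : a = b := Subsingleton.elim a b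
      simp [hab]⟩
    calc Nat.card {G : SimpleGraph (Fin 1) // X 1 G} ≤ Nat.card (SimpleGraph (Fin 1)) :=
          Nat.card_le_card_of_injective _ Subtype.val_injective
      _ ≤ 1 := by rw [Nat.card_eq_fintype_card]; exact Fintype.card_le_one_iff_subsingleton.mpr hs
      _ = _ := by simp
  | (k + 2), hcovn =>
    set n := k + 2 with hn
    have hn2 : 2 ≤ n := by omega
    choose f hf1 hf2 using hcovn
    have hYmem1 : ∀ (G : SimpleGraph (Fin n)) (hG : X n G) (i : Fin T),
        Y _ (G.comap (partEmb n T (f G hG) i)) := by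
      intro G hG i
      obtain ⟨m', φ', hr, hy⟩ := hf1 G hG i
      exact Y_transfer Y hYhered _ φ' (by rw [hr, partEmb_range]) G hy
    have hYmem2 : ∀ (G : SimpleGraph (Fin n)) (hG : X n G) (i j : Fin T), i ≠ j →
        Y _ ((SimpleGraph.fromRel
            (fun u v => G.Adj u v ∧ f G hG u = i ∧ f G hG v = j)).comap
          (pairEmb n T (f G hG) i j)) := by
      intro G hG i j hij
      obtain ⟨m', φ', hr, hy⟩ := hf2 G hG i j hij
      exact Y_transfer Y hYhered _ φ' (by rw [hr, pairEmb_range]) _ hy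
    let D : Type := Σ m : Fin (n + 1), {H : SimpleGraph (Fin (m : ℕ)) // Y (m : ℕ) H}
    let Tgt : Type := (Fin n → Fin T) × (Fin T → D) × (Fin T → Fin T → Option D)
    let val : D → Σ m : Fin (n + 1), SimpleGraph (Fin (m : ℕ)) := fun d => ⟨d.1, d.2.1⟩
    have hDfin : Finite D := by
      have : ∀ m : Fin (n + 1), Finite {H : SimpleGraph (Fin (m : ℕ)) // Y (m : ℕ) H} :=
        fun m => inferInstance
      infer_instance
    have hTfin : Finite Tgt := by infer_instance
    let e : {G : SimpleGraph (Fin n) // X n G} → Tgt := fun g =>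
      ⟨f g.1 g.2,
       fun i => ⟨⟨(partSet n T (f g.1 g.2) i).card, card_lt_succ _⟩,
         ⟨g.1.comap (partEmb n T (f g.1 g.2) i), hYmem1 g.1 g.2 i⟩⟩,
       fun i j => if h : i = j then none else
         some ⟨⟨(pairSet n T (f g.1 g.2) i j).card, card_lt_succ _⟩,
           ⟨(SimpleGraph.fromRel
              (fun u v => g.1.Adj u v ∧ f g.1 g.2 u = i ∧ f g.1 g.2 v = j)).comap
             (pairEmb n T (f g.1 g.2) i j), hYmem2 g.1 g.2 i j h⟩⟩⟩
    have einj : Function.Injective e := by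
      rintro ⟨G1, hG1⟩ ⟨G2, hG2⟩ heq
      have h1 : f G1 hG1 = f G2 hG2 := congrArg Prod.fst heq
      have h2 : (e ⟨G1, hG1⟩).2.1 = (e ⟨G2, hG2⟩).2.1 := congrArg (fun t => t.2.1) heq
      have h3 : (e ⟨G1, hG1⟩).2.2 = (e ⟨G2, hG2⟩).2.2 := congrArg (fun t => t.2.2) heq
      have hpart : ∀ i : Fin T,
          G1.comap (partEmb n T (f G1 hG1) i) = G2.comap (partEmb n T (f G1 hG1) i) := by
        intro i
        refine extract_part n T (f G1 hG1) (f G2 hG2) h1 G1 G2 i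
          (card_lt_succ _) (card_lt_succ _) ?_
        exact congrArg val (congrFun h2 i)
      have hpair : ∀ i j : Fin T, i ≠ j →
          (SimpleGraph.fromRel
              (fun u v => G1.Adj u v ∧ f G1 hG1 u = i ∧ f G1 hG1 v = j)).comap
              (pairEmb n T (f G1 hG1) i j)
            = (SimpleGraph.fromRel
              (fun u v => G2.Adj u v ∧ f G1 hG1 u = i ∧ f G1 hG1 v = j)).comap
              (pairEmb n T (f G1 hG1) i j) := by
        intro i j hij
        have h3' := congrFun (congrFun h3 i) j
        simp only [e, dif_neg hij] at h3'
        refine extract_pair n T (f G1 hG1) (f G2 hG2) h1 G1 G2 i j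
          (card_lt_succ _) (card_lt_succ _) ?_
        exact congrArg val (Option.some_injective _ h3')
      have h12 := reconstruct n T (f G1 hG1) G1 G2 hpart hpair
      have h21 := reconstruct n T (f G1 hG1) G2 G1 (fun i => (hpart i).symm)
        (fun i j hij => (hpair i j hij).symm)
      exact Subtype.ext (by ext u v; exact ⟨h12 u v, h21 u v⟩)
    have hcard : Nat.card {G : SimpleGraph (Fin n) // X n G} ≤ Nat.card Tgt :=
      Nat.card_le_card_of_injective e einj
    have hD : Nat.card D ≤ (n + 1) * (2 * n) ^ (c * n) := by
      have hsig : Nat.card D = ∑ m : Fin (n + 1),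
          Nat.card {H : SimpleGraph (Fin (m : ℕ)) // Y (m : ℕ) H} := nat_card_sigma _
      rw [hsig]
      calc ∑ m : Fin (n + 1), Nat.card {H : SimpleGraph (Fin (m : ℕ)) // Y (m : ℕ) H}
          ≤ ∑ _m : Fin (n + 1), (2 * n) ^ (c * n) := by
            apply Finset.sum_le_sum
            intro m _
            calc Nat.card {H : SimpleGraph (Fin (m : ℕ)) // Y (m : ℕ) H}
                ≤ (2 * (m : ℕ)) ^ (c * (m : ℕ)) := hcount (m : ℕ)
              _ ≤ (2 * n) ^ (c * (m : ℕ)) := Nat.pow_le_pow_left (by omega) _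
              _ ≤ (2 * n) ^ (c * n) := Nat.pow_le_pow_right (by omega)
                  (Nat.mul_le_mul_left c (by omega))
        _ = (n + 1) * (2 * n) ^ (c * n) := by
            rw [Finset.sum_const, Finset.card_univ, Fintype.card_fin, smul_eq_mul]
    have hM : (n + 1) * (2 * n) ^ (c * n) + 1 ≤ n ^ ((2 * c + 1) * n) := by
      have h1 : (1 : ℕ) ≤ (2 * n) ^ (c * n) := Nat.one_le_pow _ _ (by omega)
      have h2 : (n + 1) * (2 * n) ^ (c * n) + 1 ≤ (n + 2) * (2 * n) ^ (c * n) := by nlinarith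
      have h3 : (n + 2) * (2 * n) ^ (c * n) ≤ n ^ 2 * (n ^ 2) ^ (c * n) := by
        apply Nat.mul_le_mul
        · nlinarith
        · exact Nat.pow_le_pow_left (by nlinarith) _
      have h4 : n ^ 2 * (n ^ 2) ^ (c * n) = n ^ (2 + 2 * (c * n)) := by
        rw [← pow_mul, ← pow_add]
      have h5 : n ^ (2 + 2 * (c * n)) ≤ n ^ ((2 * c + 1) * n) := by
        apply Nat.pow_le_pow_right (by omega)
        nlinarith
      omega
    have hTgt : Nat.card Tgt ≤ T ^ n * ((n ^ ((2 * c + 1) * n)) ^ T *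
        (n ^ ((2 * c + 1) * n)) ^ (T * T)) := by
      have e1 : Nat.card Tgt = Nat.card (Fin n → Fin T) * (Nat.card (Fin T → D) *
          Nat.card (Fin T → Fin T → Option D)) := by
        rw [show Tgt = ((Fin n → Fin T) × (Fin T → D) × (Fin T → Fin T → Option D)) from rfl,
          Nat.card_prod, Nat.card_prod]
      rw [e1]
      have c1 : Nat.card (Fin n → Fin T) = T ^ n := by
        simp [Nat.card_eq_fintype_card]
      have c2 : Nat.card (Fin T → D) = (Nat.card D) ^ T := by
        rw [Nat.card_pi]
        simp
      have c3 : Nat.card (Fin T → Fin T → Option D) = (Nat.card D + 1) ^ (T * T) := by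
        rw [Nat.card_pi]
        have hin : Nat.card (Fin T → Option D) = (Nat.card D + 1) ^ T := by
          rw [Nat.card_pi]
          simp only [Finite.card_option]
          rw [Finset.prod_const, Finset.card_univ, Fintype.card_fin]
        simp only [hin]
        rw [Finset.prod_const, Finset.card_univ, Fintype.card_fin, ← pow_mul]
      rw [c1, c2, c3]
      apply Nat.mul_le_mul_left
      apply Nat.mul_le_mul
      · exact Nat.pow_le_pow_left (by omega) _
      · exact Nat.pow_le_pow_left (by omega) _
    have hT : T ^ n ≤ n ^ (T * n) := by
      calc T ^ n ≤ (n ^ T) ^ n := by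
            apply Nat.pow_le_pow_left
            calc T ≤ 2 ^ T := Nat.le_of_lt (Nat.lt_two_pow_self (n := T))
              _ ≤ n ^ T := Nat.pow_le_pow_left (by omega) T
        _ = n ^ (T * n) := by rw [← pow_mul]
    calc Nat.card {G : SimpleGraph (Fin n) // X n G} ≤ Nat.card Tgt := hcard
      _ ≤ T ^ n * ((n ^ ((2 * c + 1) * n)) ^ T * (n ^ ((2 * c + 1) * n)) ^ (T * T)) := hTgt
      _ ≤ n ^ (T * n) * ((n ^ ((2 * c + 1) * n)) ^ T * (n ^ ((2 * c + 1) * n)) ^ (T * T)) :=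
          Nat.mul_le_mul_right _ hT
      _ = n ^ ((T + (T + T * T) * (2 * c + 1)) * n) := by
          rw [← pow_mul, ← pow_mul, ← pow_add, ← pow_add]
          ring_nf
end
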